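/- arXiv:2601.22307 — 4 statements merged into one kernel-verified Lean document; each statement's English description precedes it below -/
import Mathlib

section
/- Let (X₁, X₂) be jointly Gaussian with means μ₁, μ₂, variances ν₁₁, ν₂₂ > 0 and covariance ν₁₂. Then E[Φ(X₁)Φ(X₂)] = Φ₂(μ₁/√(1+ν₁₁), μ₂/√(1+ν₂₂); ν₁₂/√((1+ν₁₁)(1+ν₂₂))), where Φ₂ is the bivariate standard normal CDF with the given correlation. -/
open MeasureTheory ProbabilityTheory Real
open scoped NNReal
open Set
open scoped ENNReal

noncomputable def npdf (x : ℝ) : ℝ := (Real.sqrt (2 * Real.pi))⁻¹ * Real.exp (-(x ^ 2) / 2)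

noncomputable def ncdf (x : ℝ) : ℝ := ∫ t in Set.Iic x, npdf t

noncomputable def ncdf2 (h k ρ : ℝ) : ℝ :=
  ∫ p in Set.Iic h ×ˢ Set.Iic k,
    (2 * Real.pi * Real.sqrt (1 - ρ ^ 2))⁻¹ *
      Real.exp (-(p.1 ^ 2 + p.2 ^ 2 - 2 * ρ * p.1 * p.2) / (2 * (1 - ρ ^ 2)))

noncomputable def P2 : Measure (ℝ × ℝ) :=
  (ProbabilityTheory.gaussianReal 0 1).prod (ProbabilityTheory.gaussianReal 0 1)



lemma npdf_eq (x : ℝ) : npdf x = gaussianPDFReal 0 1 x := by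
  simp [npdf, gaussianPDFReal, neg_div]

lemma npdf_nonneg (x : ℝ) : 0 ≤ npdf x := by
  rw [npdf_eq]; exact gaussianPDFReal_nonneg _ _ _

lemma npdf_meas : Measurable npdf := by
  simp only [funext npdf_eq]; exact measurable_gaussianPDFReal 0 1

lemma npdf_integrable : Integrable npdf := by
  simp only [funext npdf_eq]; exact integrable_gaussianPDFReal 0 1

lemma npdf_integral : ∫ x, npdf x = 1 := by
  simp only [funext npdf_eq]; exact integral_gaussianPDFReal_eq_one 0 one_ne_zero

lemma ncdf_nonneg (x : ℝ) : 0 ≤ ncdf x :=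
  setIntegral_nonneg measurableSet_Iic (fun t _ => npdf_nonneg t)

lemma ncdf_le_one (x : ℝ) : ncdf x ≤ 1 := by
  rw [← npdf_integral]
  exact setIntegral_le_integral npdf_integrable (ae_of_all _ npdf_nonneg)

lemma ncdf_mono : Monotone ncdf := fun x y hxy =>
  setIntegral_mono_set npdf_integrable.integrableOn (ae_of_all _ npdf_nonneg)
    (HasSubset.Subset.eventuallyLE (Set.Iic_subset_Iic.mpr hxy))

lemma ncdf_meas : Measurable ncdf := ncdf_mono.measurable

lemma subst_Iic {f : ℝ → ℝ} (hf : Measurable f) {c : ℝ} (hc : 0 < c) (d S : ℝ) :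
    ∫ u in Set.Iic S, c * f (c * u + d) = ∫ x in Set.Iic (c * S + d), f x := by
  have hc0 : c ≠ 0 := hc.ne'
  let e : ℝ ≃ᵐ ℝ := ((Homeomorph.mulLeft₀ c hc0).trans (Homeomorph.addRight d)).toMeasurableEquiv
  have he : (e : ℝ → ℝ) = fun u => c * u + d := rfl
  have hmap : Measure.map (e : ℝ → ℝ) volume = ENNReal.ofReal c⁻¹ • volume := by
    rw [he]
    have h1 : (fun u : ℝ => c * u + d) = (fun x => x + d) ∘ (fun u => c * u) := rfl
    rw [h1, ← Measure.map_map (measurable_add_const d) (measurable_const_mul c),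
      Real.map_volume_mul_left hc0, Measure.map_smul, map_add_right_eq_self volume d]
    congr 1
    rw [abs_of_pos (inv_pos.mpr hc)]
  have hpre : (e : ℝ → ℝ) ⁻¹' (Set.Iic (c * S + d)) = Set.Iic S := by
    ext u
    simp only [he, Set.mem_preimage, Set.mem_Iic]
    constructor
    · intro h; nlinarith
    · intro h; nlinarith
  have key := e.measurableEmbedding.setIntegral_map (μ := volume) (g := f)
    (s := Set.Iic (c * S + d))
  rw [hmap, hpre, he] at key
  rw [Measure.restrict_smul, integral_smul_measure] at key
  simp only [ENNReal.toReal_ofReal (inv_nonneg.mpr hc.le), smul_eq_mul] at key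
  rw [integral_const_mul, ← key, ← mul_assoc, mul_inv_cancel₀ hc0, one_mul]



lemma sqrt_2pi_pos : 0 < Real.sqrt (2 * Real.pi) := Real.sqrt_pos.mpr (by positivity)

-- identity K
lemma keyK (a u t : ℝ) :
    Real.sqrt (1 + a^2) * npdf (Real.sqrt (1 + a^2) * u + a * t) * npdf t
      = npdf u * gaussianPDFReal (-(a / Real.sqrt (1 + a^2)) * u)
          ⟨(1 + a^2)⁻¹, by positivity⟩ t := by
  set s := Real.sqrt (1 + a^2) with hs_def
  have hs : 0 < s := Real.sqrt_pos.mpr (by positivity)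
  have hs2 : s ^ 2 = 1 + a ^ 2 := Real.sq_sqrt (by positivity)
  have hpre : Real.sqrt (2 * Real.pi * (1 + a^2)⁻¹) = Real.sqrt (2 * Real.pi) * s⁻¹ := by
    rw [Real.sqrt_mul (by positivity), Real.sqrt_inv]
  simp only [npdf, gaussianPDFReal, NNReal.coe_mk, NNReal.toReal, hpre]
  have h1 : -(t - -(a/s) * u)^2 / (2 * (1 + a^2)⁻¹) = -((s * t + a * u)^2 / 2) := by
    rw [← hs2]
    field_simp
    ring
  have hexp : -((s * u + a * t)^2) / 2 + -(t^2)/2 = -(u^2)/2 + (-(t - -(a/s) * u)^2 / (2 * (1 + a^2)⁻¹)) := by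
    rw [h1]
    linear_combination (-(u^2 - t^2)/2) * hs2
  calc s * ((Real.sqrt (2*Real.pi))⁻¹ * Real.exp (-((s*u+a*t)^2)/2)) * ((Real.sqrt (2*Real.pi))⁻¹ * Real.exp (-(t^2)/2))
      = (Real.sqrt (2*Real.pi))⁻¹ * ((Real.sqrt (2*Real.pi) * s⁻¹)⁻¹) * Real.exp (-((s*u+a*t)^2)/2 + -(t^2)/2) := by
        rw [Real.exp_add]
        field_simp
    _ = (Real.sqrt (2*Real.pi))⁻¹ * ((Real.sqrt (2*Real.pi) * s⁻¹)⁻¹) * Real.exp (-(u^2)/2 + (-(t - -(a/s) * u)^2 / (2 * (1 + a^2)⁻¹))) := by rw [hexp]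
    _ = _ := by
        rw [Real.exp_add]
        ring

-- identity Kσ
lemma keySigma {σ : ℝ} (hσ : 0 < σ) (m u : ℝ) :
    σ * gaussianPDFReal m ⟨σ^2, sq_nonneg σ⟩ (σ * u + m) = npdf u := by
  simp only [gaussianPDFReal, NNReal.coe_mk, NNReal.toReal, npdf]
  have h1 : Real.sqrt (2 * Real.pi * σ^2) = Real.sqrt (2 * Real.pi) * σ := by
    rw [Real.sqrt_mul (by positivity), Real.sqrt_sq hσ.le]
  rw [h1]
  have h2 : -(σ * u + m - m)^2 / (2 * σ^2) = -(u^2)/2 := by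
    field_simp
    ring
  rw [h2]
  field_simp

-- identity K2
lemma keyK2 {ρ : ℝ} (hρ : 0 < 1 - ρ^2) (u v : ℝ) :
    (2 * Real.pi * Real.sqrt (1 - ρ^2))⁻¹ *
        Real.exp (-(u^2 + v^2 - 2*ρ*u*v) / (2 * (1 - ρ^2)))
      = npdf u * gaussianPDFReal (ρ * u) ⟨1 - ρ^2, hρ.le⟩ v := by
  simp only [npdf, gaussianPDFReal, NNReal.coe_mk, NNReal.toReal]
  have h1 : Real.sqrt (2 * Real.pi * (1 - ρ^2)) = Real.sqrt (2 * Real.pi) * Real.sqrt (1 - ρ^2) := Real.sqrt_mul (by positivity) _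
  have h2 : Real.sqrt (2 * Real.pi) * Real.sqrt (2 * Real.pi) = 2 * Real.pi := Real.mul_self_sqrt (by positivity)
  have hexp : -(u^2 + v^2 - 2*ρ*u*v) / (2 * (1 - ρ^2)) = -(u^2)/2 + -(v - ρ*u)^2 / (2 * (1 - ρ^2)) := by
    field_simp
    ring
  have h4 : (2 * Real.pi * Real.sqrt (1 - ρ^2))⁻¹
      = (Real.sqrt (2*Real.pi))⁻¹ * (Real.sqrt (2*Real.pi) * Real.sqrt (1 - ρ^2))⁻¹ := by
    rw [← mul_inv, ← mul_assoc, h2]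
  rw [hexp, Real.exp_add, h1, h4]
  ring



lemma gpdf_meas2 (e : ℝ) (v : ℝ≥0) :
    Measurable (fun p : ℝ × ℝ => gaussianPDFReal (e * p.1) v p.2) := by
  simp only [gaussianPDFReal]
  fun_prop

lemma gpdf_mul_bdd_int (m : ℝ) (v : ℝ≥0) {φ : ℝ → ℝ} (hφm : Measurable φ)
    (hφ0 : ∀ t, 0 ≤ φ t) (hφ1 : ∀ t, φ t ≤ 1) :
    Integrable (fun t => gaussianPDFReal m v t * φ t) := by
  have := Integrable.bdd_mul (c := 1) (integrable_gaussianPDFReal m v)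
    hφm.aestronglyMeasurable (ae_of_all _ (fun t => by
      rw [Real.norm_eq_abs, abs_of_nonneg (hφ0 t)]; exact hφ1 t))
  simpa [mul_comm] using this

lemma prodint (e : ℝ) (v : ℝ≥0) (hv : v ≠ 0) {φ : ℝ → ℝ} (hφm : Measurable φ)
    (hφ0 : ∀ t, 0 ≤ φ t) (hφ1 : ∀ t, φ t ≤ 1) (h : ℝ) :
    Integrable (fun p : ℝ × ℝ =>
      (Set.Iic h).indicator npdf p.1 * gaussianPDFReal (e * p.1) v p.2 * φ p.2)
      (volume.prod volume) := by
  have hmeas : AEStronglyMeasurable (fun p : ℝ × ℝ =>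
      (Set.Iic h).indicator npdf p.1 * gaussianPDFReal (e * p.1) v p.2 * φ p.2)
      (volume.prod volume) := by
    apply Measurable.aestronglyMeasurable
    exact (((npdf_meas.indicator measurableSet_Iic).comp measurable_fst).mul
      (gpdf_meas2 e v)).mul (hφm.comp measurable_snd)
  rw [integrable_prod_iff hmeas]
  have hind0 : ∀ u, 0 ≤ (Set.Iic h).indicator npdf u := fun u =>
    Set.indicator_nonneg (fun x _ => npdf_nonneg x) u
  constructor
  · refine ae_of_all _ (fun u => ?_)
    have := (gpdf_mul_bdd_int (e*u) v hφm hφ0 hφ1).const_mul ((Set.Iic h).indicator npdf u)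
    simpa [mul_assoc] using this
  · have hbd : ∀ u, (∫ t, ‖(Set.Iic h).indicator npdf u * gaussianPDFReal (e * u) v t * φ t‖)
        ≤ (Set.Iic h).indicator npdf u := by
      intro u
      set c := (Set.Iic h).indicator npdf u with hc
      have hc0 : 0 ≤ c := hind0 u
      have hle : ∀ t, ‖c * gaussianPDFReal (e * u) v t * φ t‖
          ≤ c * gaussianPDFReal (e * u) v t := by
        intro t
        have hg0 := gaussianPDFReal_nonneg (e*u) v t
        rw [Real.norm_eq_abs, abs_of_nonneg (mul_nonneg (mul_nonneg hc0 hg0) (hφ0 t))]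
        calc c * gaussianPDFReal (e * u) v t * φ t ≤ c * gaussianPDFReal (e * u) v t * 1 := by
              exact mul_le_mul_of_nonneg_left (hφ1 t) (mul_nonneg hc0 hg0)
          _ = c * gaussianPDFReal (e * u) v t := mul_one _
      calc (∫ t, ‖c * gaussianPDFReal (e * u) v t * φ t‖)
          ≤ ∫ t, c * gaussianPDFReal (e * u) v t :=
            integral_mono_of_nonneg (ae_of_all _ (fun t => norm_nonneg _))
              ((integrable_gaussianPDFReal (e*u) v).const_mul c) (ae_of_all _ hle)
        _ = c * ∫ t, gaussianPDFReal (e * u) v t := integral_const_mul c _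
        _ = c := by rw [integral_gaussianPDFReal_eq_one _ hv, mul_one]
    refine Integrable.mono' (g := (Set.Iic h).indicator npdf) (npdf_integrable.indicator measurableSet_Iic)
      (hmeas.norm.integral_prod_right') (ae_of_all _ (fun u => ?_))
    rw [Real.norm_eq_abs, abs_of_nonneg (integral_nonneg (fun t => norm_nonneg _))]
    exact hbd u

lemma swap' (e : ℝ) (v : ℝ≥0) (hv : v ≠ 0) {φ : ℝ → ℝ} (hφm : Measurable φ)
    (hφ0 : ∀ t, 0 ≤ φ t) (hφ1 : ∀ t, φ t ≤ 1) (h : ℝ) :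
    ∫ t : ℝ, ∫ u in Set.Iic h, npdf u * gaussianPDFReal (e * u) v t * φ t
      = ∫ u in Set.Iic h, ∫ t : ℝ, npdf u * gaussianPDFReal (e * u) v t * φ t := by
  have hint := prodint e v hv hφm hφ0 hφ1 h
  have hswap := integral_integral_swap (f := fun u t =>
    (Set.Iic h).indicator npdf u * gaussianPDFReal (e * u) v t * φ t) hint
  have hid : ∀ t : ℝ, (∫ u, (Set.Iic h).indicator npdf u * gaussianPDFReal (e * u) v t * φ t)
      = ∫ u in Set.Iic h, npdf u * gaussianPDFReal (e * u) v t * φ t := by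
    intro t
    rw [← integral_indicator measurableSet_Iic]
    congr 1
    ext u
    by_cases hu : u ∈ Set.Iic h <;> simp [hu]
  have hid2 : (∫ u, ∫ t, (Set.Iic h).indicator npdf u * gaussianPDFReal (e * u) v t * φ t)
      = ∫ u in Set.Iic h, ∫ t, npdf u * gaussianPDFReal (e * u) v t * φ t := by
    rw [← integral_indicator measurableSet_Iic]
    congr 1
    ext u
    by_cases hu : u ∈ Set.Iic h <;> simp [hu]
  calc ∫ t : ℝ, ∫ u in Set.Iic h, npdf u * gaussianPDFReal (e * u) v t * φ t
      = ∫ t : ℝ, ∫ u : ℝ, (Set.Iic h).indicator npdf u * gaussianPDFReal (e * u) v t * φ t :=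
        integral_congr_ae (ae_of_all _ (fun t => (hid t).symm))
    _ = ∫ u : ℝ, ∫ t : ℝ, (Set.Iic h).indicator npdf u * gaussianPDFReal (e * u) v t * φ t :=
        hswap.symm
    _ = _ := hid2

lemma mk_ne_zero {x : ℝ} (hx : 0 < x) : (⟨x, hx.le⟩ : ℝ≥0) ≠ 0 := by
  intro h0
  have : x = 0 := congrArg NNReal.toReal h0
  exact hx.ne' this

lemma integral_gaussianReal (m : ℝ) {v : ℝ≥0} (hv : v ≠ 0) (f : ℝ → ℝ) :
    ∫ x, f x ∂(gaussianReal m v) = ∫ x, gaussianPDFReal m v x * f x := by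
  rw [gaussianReal_of_var_ne_zero m hv]
  have hd : gaussianPDF m v = fun x => (((gaussianPDFReal m v x).toNNReal : ℝ≥0) : ℝ≥0∞) := rfl
  rw [hd, integral_withDensity_eq_integral_smul
    ((measurable_gaussianPDFReal m v).real_toNNReal) f]
  congr 1
  ext x
  rw [NNReal.smul_def, smul_eq_mul, Real.coe_toNNReal _ (gaussianPDFReal_nonneg m v x)]

-- Lemma A, Lebesgue form
lemma lemA (α β : ℝ) :
    ∫ t : ℝ, ncdf (α + β * t) * npdf t = ncdf (α / Real.sqrt (1 + β^2)) := by
  set s := Real.sqrt (1 + β^2) with hs_def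
  have hs : 0 < s := Real.sqrt_pos.mpr (by positivity)
  set h := α / s with hh_def
  have hsh : s * h = α := by
    rw [hh_def, mul_div_cancel₀ _ hs.ne']
  have hncdf : ∀ t : ℝ, ncdf (α + β * t) = ∫ u in Set.Iic h, s * npdf (s * u + β * t) := by
    intro t
    rw [subst_Iic npdf_meas hs (β * t) h]
    rw [show s * h + β * t = α + β * t by rw [hsh], ncdf]
  have hv : (⟨(1 + β^2)⁻¹, by positivity⟩ : ℝ≥0) ≠ 0 := mk_ne_zero (by positivity)
  calc ∫ t : ℝ, ncdf (α + β * t) * npdf t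
      = ∫ t : ℝ, ∫ u in Set.Iic h, npdf u * gaussianPDFReal (-(β / s) * u)
          ⟨(1 + β^2)⁻¹, by positivity⟩ t * (fun _ : ℝ => (1:ℝ)) t := by
        congr 1
        ext t
        rw [hncdf t, ← integral_mul_const]
        congr 1
        ext u
        rw [← keyK β u t]
        simp
        left; rfl
    _ = ∫ u in Set.Iic h, ∫ t : ℝ, npdf u * gaussianPDFReal (-(β / s) * u)
          ⟨(1 + β^2)⁻¹, by positivity⟩ t * (fun _ : ℝ => (1:ℝ)) t :=
        swap' (-(β / s)) _ hv measurable_const (fun _ => zero_le_one) (fun _ => le_refl 1) h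
    _ = ∫ u in Set.Iic h, npdf u := by
        apply setIntegral_congr_ae measurableSet_Iic
        refine ae_of_all _ (fun u _ => ?_)
        simp only [mul_one]
        rw [integral_const_mul, integral_gaussianPDFReal_eq_one _ hv, mul_one]
    _ = ncdf h := rfl

-- Lemma A, gaussianReal form
lemma lemA_N (α β : ℝ) :
    ∫ t, ncdf (α + β * t) ∂(gaussianReal 0 1) = ncdf (α / Real.sqrt (1 + β^2)) := by
  rw [integral_gaussianReal 0 one_ne_zero]
  rw [← lemA α β]
  congr 1
  ext t
  rw [← npdf_eq, mul_comm]

-- Lemma A' : CDF of general gaussian density on Iic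
lemma lemA' {σ : ℝ} (hσ : 0 < σ) (m k : ℝ) :
    ∫ y in Set.Iic k, gaussianPDFReal m ⟨σ^2, sq_nonneg σ⟩ y = ncdf ((k - m) / σ) := by
  have hmeas : Measurable (fun y => gaussianPDFReal m ⟨σ^2, sq_nonneg σ⟩ y) :=
    measurable_gaussianPDFReal _ _
  have hsub := subst_Iic hmeas hσ m ((k - m) / σ)
  have hk : σ * ((k - m) / σ) + m = k := by field_simp; ring
  rw [hk] at hsub
  rw [← hsub, ncdf]
  apply setIntegral_congr_ae measurableSet_Iic
  refine ae_of_all _ (fun u _ => ?_)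
  rw [keySigma hσ m u]

-- Lemma B : integral of ncdf ∘ affine against general gaussian
lemma lemB {σ : ℝ} (hσ : 0 < σ) (m p q : ℝ) :
    ∫ t, ncdf (p + q * t) ∂(gaussianReal m ⟨σ^2, sq_nonneg σ⟩)
      = ncdf ((p + q * m) / Real.sqrt (1 + (q * σ)^2)) := by
  have hmap : gaussianReal m ⟨σ^2, sq_nonneg σ⟩
      = Measure.map (fun x => σ * x + m) (gaussianReal 0 1) := by
    have h1 : (fun x : ℝ => σ * x + m) = (fun y => y + m) ∘ (fun x => σ * x) := rfl
    rw [h1, ← Measure.map_map (measurable_add_const m) (measurable_const_mul σ),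
      gaussianReal_map_const_mul σ, gaussianReal_map_add_const m]
    norm_num
    rfl
  rw [hmap, integral_map (measurable_const_mul σ |>.add_const m).aemeasurable
    ((show Measurable fun t => ncdf (p + q * t) from
      ncdf_meas.comp ((measurable_const_mul q).const_add p)).aestronglyMeasurable)]
  calc ∫ x, ncdf (p + q * (σ * x + m)) ∂(gaussianReal 0 1)
      = ∫ x, ncdf ((p + q * m) + (q * σ) * x) ∂(gaussianReal 0 1) := by
        congr 1; ext x; ring_nf
    _ = _ := lemA_N (p + q * m) (q * σ)



lemma rhs_red {ρ : ℝ} (hρ : 0 < 1 - ρ^2) (h k : ℝ) :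
    ncdf2 h k ρ
      = ∫ u in Set.Iic h, npdf u * ncdf ((k - ρ * u) / Real.sqrt (1 - ρ^2)) := by
  have hσ : 0 < Real.sqrt (1 - ρ^2) := Real.sqrt_pos.mpr hρ
  have hvv : (⟨(Real.sqrt (1 - ρ^2))^2, sq_nonneg _⟩ : ℝ≥0) = ⟨1 - ρ^2, hρ.le⟩ :=
    NNReal.coe_injective (by exact Real.sq_sqrt hρ.le)
  set φ : ℝ → ℝ := (Set.Iic k).indicator (fun _ => 1) with hφ_def
  have hφm : Measurable φ := measurable_const.indicator measurableSet_Iic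
  have hφ0 : ∀ t, 0 ≤ φ t := fun t => Set.indicator_nonneg (fun _ _ => zero_le_one) t
  have hφ1 : ∀ t, φ t ≤ 1 := fun t => by
    by_cases ht : t ∈ Set.Iic k <;> simp [hφ_def, ht]
  have hv : (⟨1 - ρ^2, hρ.le⟩ : ℝ≥0) ≠ 0 := mk_ne_zero hρ
  have hint : IntegrableOn
      (fun p : ℝ × ℝ => npdf p.1 * gaussianPDFReal (ρ * p.1) ⟨1 - ρ^2, hρ.le⟩ p.2)
      (Set.Iic h ×ˢ Set.Iic k) (volume.prod volume) := by
    rw [← integrable_indicator_iff (measurableSet_Iic.prod measurableSet_Iic)]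
    have heq : (Set.Iic h ×ˢ Set.Iic k).indicator
        (fun p : ℝ × ℝ => npdf p.1 * gaussianPDFReal (ρ * p.1) ⟨1 - ρ^2, hρ.le⟩ p.2)
        = fun p : ℝ × ℝ => (Set.Iic h).indicator npdf p.1
            * gaussianPDFReal (ρ * p.1) ⟨1 - ρ^2, hρ.le⟩ p.2 * φ p.2 := by
      ext p
      simp only [Set.indicator_apply, Set.mem_prod, hφ_def]
      by_cases h1 : p.1 ∈ Set.Iic h <;> by_cases h2 : p.2 ∈ Set.Iic k <;>
        simp [h1, h2]
    rw [heq]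
    exact prodint ρ _ hv hφm hφ0 hφ1 h
  calc ncdf2 h k ρ
      = ∫ p in Set.Iic h ×ˢ Set.Iic k,
          npdf p.1 * gaussianPDFReal (ρ * p.1) ⟨1 - ρ^2, hρ.le⟩ p.2 := by
        rw [ncdf2]
        apply setIntegral_congr_ae (measurableSet_Iic.prod measurableSet_Iic)
        exact ae_of_all _ (fun p _ => keyK2 hρ p.1 p.2)
    _ = ∫ x in Set.Iic h, ∫ y in Set.Iic k,
          npdf x * gaussianPDFReal (ρ * x) ⟨1 - ρ^2, hρ.le⟩ y := by
        rw [show (volume : Measure (ℝ × ℝ)) = volume.prod volume from Measure.volume_eq_prod ℝ ℝ]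
        exact setIntegral_prod _ hint
    _ = _ := by
        apply setIntegral_congr_ae measurableSet_Iic
        refine ae_of_all _ (fun x _ => ?_)
        rw [integral_const_mul, ← hvv, lemA' hσ (ρ * x) k]

lemma alg (a b c μ₂ u : ℝ) :
    (μ₂ / Real.sqrt (1+c^2) + (b / Real.sqrt (1+c^2)) * (-(a / Real.sqrt (1+a^2)) * u)) /
        Real.sqrt (1 + ((b / Real.sqrt (1+c^2)) * (Real.sqrt (1+a^2))⁻¹)^2)
      = (μ₂ / Real.sqrt (1 + (b^2+c^2)) - (a*b / Real.sqrt ((1+a^2) * (1+(b^2+c^2)))) * u) /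
        Real.sqrt (1 - (a*b / Real.sqrt ((1+a^2)*(1+(b^2+c^2))))^2) := by
  set s1 := Real.sqrt (1+a^2) with hs1_def
  set τ := Real.sqrt (1+c^2) with hτ_def
  set s2 := Real.sqrt (1+(b^2+c^2)) with hs2_def
  have hs1 : 0 < s1 := Real.sqrt_pos.mpr (by positivity)
  have hτ : 0 < τ := Real.sqrt_pos.mpr (by positivity)
  have hs2 : 0 < s2 := Real.sqrt_pos.mpr (by positivity)
  have hs1sq : s1^2 = 1+a^2 := Real.sq_sqrt (by positivity)
  have hτsq : τ^2 = 1+c^2 := Real.sq_sqrt (by positivity)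
  have hs2sq : s2^2 = 1+(b^2+c^2) := Real.sq_sqrt (by positivity)
  set D := (1+a^2)*(1+c^2)+b^2 with hD_def
  have hDpos : 0 < D := by positivity
  set sD := Real.sqrt D with hsD_def
  have hsD : 0 < sD := Real.sqrt_pos.mpr hDpos
  have hsDsq : sD^2 = D := Real.sq_sqrt hDpos.le
  have hsplit : Real.sqrt ((1+a^2) * (1+(b^2+c^2))) = s1*s2 := by
    rw [hs1_def, hs2_def, ← Real.sqrt_mul (by positivity)]
  have e1 : 1 + ((b/τ)*s1⁻¹)^2 = D/(τ*s1)^2 := by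
    have h1 : ((b/τ)*s1⁻¹)^2 = b^2 / (τ^2 * s1^2) := by ring
    rw [h1, mul_pow, hτsq, hs1sq, hD_def]
    have h2 : (0:ℝ) < (1+c^2) * (1+a^2) := by positivity
    field_simp
  have e2 : Real.sqrt (1 + ((b/τ)*s1⁻¹)^2) = sD/(τ*s1) := by
    rw [e1, Real.sqrt_div (by positivity) _, Real.sqrt_sq (by positivity)]
  have e4 : 1 - (a*b/(s1*s2))^2 = D/(s1*s2)^2 := by
    have h1 : (a*b/(s1*s2))^2 = a^2*b^2 / (s1^2 * s2^2) := by ring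
    rw [h1, mul_pow, hs1sq, hs2sq, hD_def]
    have h2 : (0:ℝ) < (1+a^2) * (1+(b^2+c^2)) := by positivity
    field_simp
    ring
  have e5 : Real.sqrt (1 - (a*b/(s1*s2))^2) = sD/(s1*s2) := by
    rw [e4, Real.sqrt_div (by positivity) _, Real.sqrt_sq (by positivity)]
  rw [hsplit, e2, e5]
  field_simp
  ring

/-- Bivariate Gaussian `(X₁, X₂)` represented as `X₁ = μ₁ + a W₁`,
`X₂ = μ₂ + b W₁ + c W₂` for independent standard normals `W₁, W₂`. -/
theorem gaussian_expectation_ncdf_mul_ncdf (μ₁ μ₂ ν₁₁ ν₂₂ ν₁₂ a b c : ℝ)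
    (h11 : ν₁₁ = a ^ 2) (h22 : ν₂₂ = b ^ 2 + c ^ 2) (h12 : ν₁₂ = a * b)
    (hp1 : 0 < ν₁₁) (hp2 : 0 < ν₂₂) :
    ∫ w : ℝ × ℝ, ncdf (μ₁ + a * w.1) * ncdf (μ₂ + b * w.1 + c * w.2) ∂P2
      = ncdf2 (μ₁ / Real.sqrt (1 + ν₁₁)) (μ₂ / Real.sqrt (1 + ν₂₂))
          (ν₁₂ / Real.sqrt ((1 + ν₁₁) * (1 + ν₂₂))) := by
  subst h11 h22 h12
  set s1 := Real.sqrt (1 + a^2) with hs1_def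
  set τ := Real.sqrt (1 + c^2) with hτ_def
  have hs1 : 0 < s1 := Real.sqrt_pos.mpr (by positivity)
  have hτ : 0 < τ := Real.sqrt_pos.mpr (by positivity)
  have hs1sq : s1^2 = 1+a^2 := Real.sq_sqrt (by positivity)
  have hτsq : τ^2 = 1+c^2 := Real.sq_sqrt (by positivity)
  set h := μ₁ / s1 with hh_def
  set k := μ₂ / Real.sqrt (1 + (b^2+c^2)) with hk_def
  set ρ := a*b / Real.sqrt ((1+a^2) * (1+(b^2+c^2))) with hρ_def
  -- ρ² < 1
  have hXpos : (0:ℝ) < (1+a^2) * (1+(b^2+c^2)) := by positivity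
  have hXsq : (Real.sqrt ((1+a^2) * (1+(b^2+c^2))))^2 = (1+a^2) * (1+(b^2+c^2)) :=
    Real.sq_sqrt hXpos.le
  have hρ2 : 0 < 1 - ρ^2 := by
    have h1 : ρ^2 = (a*b)^2 / ((1+a^2) * (1+(b^2+c^2))) := by
      rw [hρ_def, div_pow, hXsq]
    rw [h1]
    rw [sub_pos, div_lt_one hXpos]
    nlinarith [sq_nonneg a, sq_nonneg b, sq_nonneg c, sq_nonneg (a*c)]
  rw [rhs_red hρ2 h k]
  -- notation for the proof
  have hv : (⟨(1 + a^2)⁻¹, by positivity⟩ : ℝ≥0) ≠ 0 := mk_ne_zero (by positivity)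
  set φ : ℝ → ℝ := fun x => ncdf (μ₂/τ + (b/τ) * x) with hφ_def
  have hφm : Measurable φ := ncdf_meas.comp ((measurable_const_mul (b/τ)).const_add (μ₂/τ))
  have hφ0 : ∀ t, 0 ≤ φ t := fun t => ncdf_nonneg _
  have hφ1 : ∀ t, φ t ≤ 1 := fun t => ncdf_le_one _
  have hFmeas : Measurable (fun w : ℝ × ℝ => ncdf (μ₁ + a * w.1) * ncdf (μ₂ + b * w.1 + c * w.2)) := by
    apply Measurable.mul
    · exact ncdf_meas.comp ((measurable_fst.const_mul a).const_add μ₁)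
    · exact ncdf_meas.comp (((measurable_fst.const_mul b).const_add μ₂).add
        (measurable_snd.const_mul c))
  have hFint : Integrable (fun w : ℝ × ℝ => ncdf (μ₁ + a * w.1) * ncdf (μ₂ + b * w.1 + c * w.2))
      ((gaussianReal 0 1).prod (gaussianReal 0 1)) := by
    refine Integrable.mono' (g := fun _ => (1:ℝ)) (integrable_const 1)
      hFmeas.aestronglyMeasurable (ae_of_all _ (fun w => ?_))
    rw [Real.norm_eq_abs, abs_mul, abs_of_nonneg (ncdf_nonneg _), abs_of_nonneg (ncdf_nonneg _)]
    exact mul_le_one₀ (ncdf_le_one _) (ncdf_nonneg _) (ncdf_le_one _)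
  have hncdf1 : ∀ x : ℝ, ncdf (μ₁ + a * x) = ∫ u in Set.Iic h, s1 * npdf (s1 * u + a * x) := by
    intro x
    rw [subst_Iic npdf_meas hs1 (a * x) h]
    rw [show s1 * h + a * x = μ₁ + a * x by rw [hh_def, mul_div_cancel₀ _ hs1.ne'], ncdf]
  calc ∫ w : ℝ × ℝ, ncdf (μ₁ + a * w.1) * ncdf (μ₂ + b * w.1 + c * w.2) ∂P2
      = ∫ x, ∫ y, ncdf (μ₁ + a * x) * ncdf (μ₂ + b * x + c * y)
          ∂(gaussianReal 0 1) ∂(gaussianReal 0 1) := by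
        rw [P2]; exact integral_prod _ hFint
    _ = ∫ x, ncdf (μ₁ + a * x) * φ x ∂(gaussianReal 0 1) := by
        apply integral_congr_ae (ae_of_all _ (fun x => ?_))
        rw [integral_const_mul, lemA_N (μ₂ + b * x) c]
        rw [hφ_def]
        congr 1
        rw [← hτ_def]
        field_simp
    _ = ∫ x, ncdf (μ₁ + a * x) * φ x * npdf x := by
        rw [integral_gaussianReal 0 one_ne_zero]
        apply integral_congr_ae (ae_of_all _ (fun x => ?_))
        rw [← npdf_eq]; ring
    _ = ∫ x, ∫ u in Set.Iic h, npdf u * gaussianPDFReal (-(a/s1) * u)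
          ⟨(1 + a^2)⁻¹, by positivity⟩ x * φ x := by
        apply integral_congr_ae (ae_of_all _ (fun x => ?_))
        rw [hncdf1 x, mul_assoc, ← integral_mul_const]
        apply setIntegral_congr_ae measurableSet_Iic
        refine ae_of_all _ (fun u _ => ?_)
        have hK := keyK a u x
        rw [← hs1_def] at hK
        linear_combination (φ x) * hK
    _ = ∫ u in Set.Iic h, ∫ x, npdf u * gaussianPDFReal (-(a/s1) * u)
          ⟨(1 + a^2)⁻¹, by positivity⟩ x * φ x :=
        swap' (-(a/s1)) _ hv hφm hφ0 hφ1 h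
    _ = ∫ u in Set.Iic h, npdf u * ncdf ((k - ρ * u) / Real.sqrt (1 - ρ^2)) := by
        apply setIntegral_congr_ae measurableSet_Iic
        refine ae_of_all _ (fun u _ => ?_)
        simp_rw [mul_assoc, integral_const_mul]
        congr 1
        have hvv : (⟨(1 + a^2)⁻¹, by positivity⟩ : ℝ≥0) = ⟨(s1⁻¹)^2, sq_nonneg _⟩ := by
          apply NNReal.coe_injective
          show ((1+a^2)⁻¹ : ℝ) = (s1⁻¹)^2
          rw [inv_pow, hs1sq]
        rw [← integral_gaussianReal _ hv φ, hvv, hφ_def]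
        rw [lemB (inv_pos.mpr hs1) (-(a/s1) * u) (μ₂/τ) (b/τ)]
        exact congrArg ncdf (alg a b c μ₂ u)
end

section
/- For |ρ| < 1, the derivative of the bivariate standard normal CDF with respect to the correlation parameter satisfies ∂Φ₂(h, k; ρ)/∂ρ = (1/(2π√(1-ρ²))) exp(-(h² + k² - 2ρhk)/(2(1-ρ²))). -/
open MeasureTheory ProbabilityTheory Real
open scoped NNReal
open Set Filter
open scoped Topology

noncomputable def bvn (r x y : ℝ) : ℝ :=
  (2 * Real.pi * Real.sqrt (1 - r ^ 2))⁻¹ *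
    Real.exp (-(x ^ 2 + y ^ 2 - 2 * r * x * y) / (2 * (1 - r ^ 2)))

noncomputable def bvnr (r x y : ℝ) : ℝ :=
  bvn r x y * ((r * y - x) * (r * x - y) / (1 - r ^ 2) ^ 2 + r / (1 - r ^ 2))

lemma one_sub_sq_pos {r : ℝ} (hr : |r| < 1) : 0 < 1 - r ^ 2 := by
  have := abs_lt.1 hr
  nlinarith [this.1, this.2]

-- derivative in x
lemma bvn_hasDerivAt_x {r : ℝ} (hr : |r| < 1) (y x : ℝ) :
    HasDerivAt (fun x => bvn r x y) (bvn r x y * ((r * y - x) / (1 - r ^ 2))) x := by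
  have hu : (0:ℝ) < 1 - r ^ 2 := one_sub_sq_pos hr
  have hN : HasDerivAt (fun x : ℝ => -(x ^ 2 + y ^ 2 - 2 * r * x * y))
      (2 * r * y - 2 * x) x := by
    have h1 : HasDerivAt (fun x : ℝ => x ^ 2) (2 * x) x := by
      simpa using hasDerivAt_pow 2 x
    have h2 : HasDerivAt (fun x : ℝ => (2 * r * y) * x) (2 * r * y) x := by
      simpa using (hasDerivAt_id x).const_mul (2 * r * y)
    have h := ((h1.add_const (y ^ 2)).sub h2).neg
    refine (h.congr_of_eventuallyEq (Eventually.of_forall fun t => by simp only [Pi.neg_apply, Pi.sub_apply]; ring)).congr_deriv ?_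
    ring
  have hE : HasDerivAt (fun x : ℝ => -(x ^ 2 + y ^ 2 - 2 * r * x * y) / (2 * (1 - r ^ 2)))
      ((2 * r * y - 2 * x) / (2 * (1 - r ^ 2))) x := hN.div_const _
  have h := (hE.exp).const_mul ((2 * Real.pi * Real.sqrt (1 - r ^ 2))⁻¹)
  refine h.congr_deriv ?_
  unfold bvn
  field_simp

lemma bvn_hasDerivAt_y {r : ℝ} (hr : |r| < 1) (x y : ℝ) :
    HasDerivAt (fun y => bvn r x y) (bvn r x y * ((r * x - y) / (1 - r ^ 2))) y := by
  have hu : (0:ℝ) < 1 - r ^ 2 := one_sub_sq_pos hr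
  have hN : HasDerivAt (fun y : ℝ => -(x ^ 2 + y ^ 2 - 2 * r * x * y))
      (2 * r * x - 2 * y) y := by
    have h1 : HasDerivAt (fun y : ℝ => y ^ 2) (2 * y) y := by
      simpa using hasDerivAt_pow 2 y
    have h2 : HasDerivAt (fun y : ℝ => (2 * r * x) * y) (2 * r * x) y := by
      simpa using (hasDerivAt_id y).const_mul (2 * r * x)
    have h := ((h1.const_add (x ^ 2)).sub h2).neg
    refine (h.congr_of_eventuallyEq (Eventually.of_forall fun t => by simp only [Pi.neg_apply, Pi.sub_apply])).congr_deriv ?_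
    ring
  have hE : HasDerivAt (fun y : ℝ => -(x ^ 2 + y ^ 2 - 2 * r * x * y) / (2 * (1 - r ^ 2)))
      ((2 * r * x - 2 * y) / (2 * (1 - r ^ 2))) y := hN.div_const _
  have h := (hE.exp).const_mul ((2 * Real.pi * Real.sqrt (1 - r ^ 2))⁻¹)
  refine h.congr_deriv ?_
  unfold bvn
  field_simp

lemma bvnx_hasDerivAt_y {r : ℝ} (hr : |r| < 1) (x y : ℝ) :
    HasDerivAt (fun y => bvn r x y * ((r * y - x) / (1 - r ^ 2))) (bvnr r x y) y := by
  have hu : (0:ℝ) < 1 - r ^ 2 := one_sub_sq_pos hr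
  have hL : HasDerivAt (fun y : ℝ => (r * y - x) / (1 - r ^ 2)) (r / (1 - r ^ 2)) y := by
    have h2 : HasDerivAt (fun y : ℝ => r * y) r y := by
      simpa using (hasDerivAt_id y).const_mul r
    exact (h2.sub_const x).div_const _
  have h := (bvn_hasDerivAt_y hr x y).mul hL
  refine h.congr_deriv ?_
  unfold bvnr
  field_simp

lemma bvn_hasDerivAt_r (x y : ℝ) {r : ℝ} (hr : |r| < 1) :
    HasDerivAt (fun r => bvn r x y) (bvnr r x y) r := by
  have hu : (0:ℝ) < 1 - r ^ 2 := one_sub_sq_pos hr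
  have hs : 0 < Real.sqrt (1 - r ^ 2) := Real.sqrt_pos.2 hu
  have hU : HasDerivAt (fun r : ℝ => 1 - r ^ 2) (-(2 * r)) r := by
    simpa using ((hasDerivAt_pow 2 r).const_sub 1)
  have hS : HasDerivAt (fun r : ℝ => Real.sqrt (1 - r ^ 2))
      (-(2 * r) / (2 * Real.sqrt (1 - r ^ 2))) r := hU.sqrt hu.ne'
  have hA : HasDerivAt (fun r : ℝ => (2 * Real.pi * Real.sqrt (1 - r ^ 2))⁻¹)
      (-(2 * Real.pi * (-(2 * r) / (2 * Real.sqrt (1 - r ^ 2)))) /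
        (2 * Real.pi * Real.sqrt (1 - r ^ 2)) ^ 2) r := by
    have h := (hS.const_mul (2 * Real.pi)).inv (by positivity)
    exact h
  have hN : HasDerivAt (fun r : ℝ => -(x ^ 2 + y ^ 2 - 2 * r * x * y)) (2 * x * y) r := by
    have h2 : HasDerivAt (fun r : ℝ => (2 * x * y) * r) (2 * x * y) r := by
      simpa using (hasDerivAt_id r).const_mul (2 * x * y)
    have h := ((hasDerivAt_const r (x ^ 2 + y ^ 2)).sub h2).neg
    refine (h.congr_of_eventuallyEq (Eventually.of_forall fun t => by simp only [Pi.neg_apply, Pi.sub_apply]; ring)).congr_deriv ?_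
    ring
  have hD : HasDerivAt (fun r : ℝ => 2 * (1 - r ^ 2)) (2 * -(2 * r)) r := hU.const_mul 2
  have hE : HasDerivAt (fun r : ℝ => -(x ^ 2 + y ^ 2 - 2 * r * x * y) / (2 * (1 - r ^ 2)))
      ((2 * x * y * (2 * (1 - r ^ 2)) - -(x ^ 2 + y ^ 2 - 2 * r * x * y) * (2 * -(2 * r))) /
        (2 * (1 - r ^ 2)) ^ 2) r := hN.div hD (by positivity)
  have h := hA.mul hE.exp
  refine h.congr_deriv ?_
  unfold bvnr bvn
  have hs2 : Real.sqrt (1 - r ^ 2) ^ 2 = 1 - r ^ 2 := Real.sq_sqrt hu.le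
  set s := Real.sqrt (1 - r ^ 2) with hsdef
  set E := Real.exp (-(x ^ 2 + y ^ 2 - 2 * r * x * y) / (2 * (1 - r ^ 2))) with hEdef
  rw [← hs2]
  have hpi := Real.pi_ne_zero
  field_simp
  linear_combination (E * x * y) * hs2

lemma exp_arg_bound {c0 r x y : ℝ} (h1 : c0 < 1) (hr : |r| ≤ c0) :
    (1 - c0) / 2 * x ^ 2 + (1 - c0) / 2 * y ^ 2 ≤
      (x ^ 2 + y ^ 2 - 2 * r * x * y) / (2 * (1 - r ^ 2)) := by
  have hc00 : 0 ≤ c0 := (abs_nonneg r).trans hr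
  have hr1 : |r| < 1 := lt_of_le_of_lt hr h1
  have hu : 0 < 1 - r ^ 2 := one_sub_sq_pos hr1
  have hxy : |x * y| ≤ (x ^ 2 + y ^ 2) / 2 := by
    rw [abs_mul]
    nlinarith [sq_nonneg (|x| - |y|), sq_abs x, sq_abs y]
  have h2 : r * (x * y) ≤ |r| * |x * y| := by
    calc r * (x * y) ≤ |r * (x * y)| := le_abs_self _
    _ = |r| * |x * y| := abs_mul _ _
  have habs : 2 * r * x * y ≤ c0 * (x ^ 2 + y ^ 2) := by
    have h3 : |r| * |x * y| ≤ c0 * ((x ^ 2 + y ^ 2) / 2) :=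
      mul_le_mul hr hxy (abs_nonneg _) hc00
    nlinarith
  have hQ : (1 - c0) * (x ^ 2 + y ^ 2) ≤ x ^ 2 + y ^ 2 - 2 * r * x * y := by nlinarith
  have hQ0 : 0 ≤ x ^ 2 + y ^ 2 - 2 * r * x * y := by nlinarith [sq_nonneg x, sq_nonneg y]
  have h2u : 2 * (1 - r ^ 2) ≤ 2 := by nlinarith [sq_nonneg r]
  calc (1 - c0) / 2 * x ^ 2 + (1 - c0) / 2 * y ^ 2
      = ((1 - c0) * (x ^ 2 + y ^ 2)) / 2 := by ring
    _ ≤ (x ^ 2 + y ^ 2 - 2 * r * x * y) / 2 := by linarith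
    _ ≤ (x ^ 2 + y ^ 2 - 2 * r * x * y) / (2 * (1 - r ^ 2)) :=
        div_le_div_of_nonneg_left hQ0 (by positivity) h2u

lemma bvn_nonneg (r x y : ℝ) : 0 ≤ bvn r x y := by
  unfold bvn; positivity

lemma bvn_le {c0 r : ℝ} (h1 : c0 < 1) (hr : |r| ≤ c0) (x y : ℝ) :
    bvn r x y ≤ (2 * Real.pi * Real.sqrt (1 - c0 ^ 2))⁻¹ *
      (Real.exp (-((1 - c0) / 2 * x ^ 2)) * Real.exp (-((1 - c0) / 2 * y ^ 2))) := by
  have hc00 : 0 ≤ c0 := (abs_nonneg r).trans hr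
  have hr1 : |r| < 1 := lt_of_le_of_lt hr h1
  have hu : 0 < 1 - r ^ 2 := one_sub_sq_pos hr1
  have hu0 : 0 < 1 - c0 ^ 2 := by nlinarith
  have h1' : (2 * Real.pi * Real.sqrt (1 - r ^ 2))⁻¹ ≤
      (2 * Real.pi * Real.sqrt (1 - c0 ^ 2))⁻¹ := by
    apply inv_anti₀ (by positivity)
    have : Real.sqrt (1 - c0 ^ 2) ≤ Real.sqrt (1 - r ^ 2) := by
      apply Real.sqrt_le_sqrt
      nlinarith [sq_abs r, abs_nonneg r]
    nlinarith [Real.pi_pos, Real.sqrt_nonneg (1 - c0 ^ 2)]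
  have h2' : Real.exp (-(x ^ 2 + y ^ 2 - 2 * r * x * y) / (2 * (1 - r ^ 2))) ≤
      Real.exp (-((1 - c0) / 2 * x ^ 2)) * Real.exp (-((1 - c0) / 2 * y ^ 2)) := by
    rw [← Real.exp_add]
    apply Real.exp_le_exp.2
    have := exp_arg_bound (x := x) (y := y) h1 hr
    rw [neg_div]
    linarith
  unfold bvn
  apply mul_le_mul h1' h2' (Real.exp_nonneg _) (by positivity)

lemma bvnr_abs_le {c0 r : ℝ} (h1 : c0 < 1) (hr : |r| ≤ c0) (x y : ℝ) :
    |bvnr r x y| ≤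
      ((2 * Real.pi * Real.sqrt (1 - c0 ^ 2))⁻¹ * (2 / (1 - c0 ^ 2) ^ 2 + 1 / (1 - c0 ^ 2))) *
        ((1 + x ^ 2) * Real.exp (-((1 - c0) / 2 * x ^ 2)) *
          ((1 + y ^ 2) * Real.exp (-((1 - c0) / 2 * y ^ 2)))) := by
  have hc00 : 0 ≤ c0 := (abs_nonneg r).trans hr
  have hr1 : |r| < 1 := lt_of_le_of_lt hr h1
  have hu : 0 < 1 - r ^ 2 := one_sub_sq_pos hr1
  have hu0 : 0 < 1 - c0 ^ 2 := by nlinarith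
  have huu : 1 - c0 ^ 2 ≤ 1 - r ^ 2 := by nlinarith [sq_abs r, abs_nonneg r]
  have hP : (0:ℝ) ≤ (1 + x ^ 2) * (1 + y ^ 2) := by positivity
  have hP1 : (1:ℝ) ≤ (1 + x ^ 2) * (1 + y ^ 2) := by nlinarith [sq_nonneg x, sq_nonneg y]
  have hA : |(r * y - x) * (r * x - y)| ≤ 2 * ((1 + x ^ 2) * (1 + y ^ 2)) := by
    rw [abs_mul]
    have e1 : |r * y - x| ≤ |y| + |x| := by
      calc |r * y - x| ≤ |r * y| + |x| := abs_sub _ _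
        _ ≤ |y| + |x| := by
            rw [abs_mul]
            nlinarith [abs_nonneg y, abs_nonneg x]
    have e2 : |r * x - y| ≤ |x| + |y| := by
      calc |r * x - y| ≤ |r * x| + |y| := abs_sub _ _
        _ ≤ |x| + |y| := by
            rw [abs_mul]
            nlinarith [abs_nonneg y, abs_nonneg x]
    calc |r * y - x| * |r * x - y| ≤ (|y| + |x|) * (|x| + |y|) :=
          mul_le_mul e1 e2 (abs_nonneg _) (by positivity)
      _ ≤ 2 * ((1 + x ^ 2) * (1 + y ^ 2)) := by
          nlinarith [sq_nonneg (|x| - |y|), sq_abs x, sq_abs y, abs_nonneg x, abs_nonneg y,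
            sq_nonneg (|x| * |y|), sq_nonneg (|x| * |y| - 1)]
  have hexpr : |(r * y - x) * (r * x - y) / (1 - r ^ 2) ^ 2 + r / (1 - r ^ 2)| ≤
      (2 / (1 - c0 ^ 2) ^ 2 + 1 / (1 - c0 ^ 2)) * ((1 + x ^ 2) * (1 + y ^ 2)) := by
    have t1 : |(r * y - x) * (r * x - y) / (1 - r ^ 2) ^ 2| ≤
        2 * ((1 + x ^ 2) * (1 + y ^ 2)) / (1 - c0 ^ 2) ^ 2 := by
      rw [abs_div, abs_of_pos (by positivity : (0:ℝ) < (1 - r ^ 2) ^ 2)]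
      exact div_le_div₀ (by positivity) hA (by positivity) (by nlinarith)
    have t2 : |r / (1 - r ^ 2)| ≤ 1 / (1 - c0 ^ 2) := by
      rw [abs_div, abs_of_pos hu]
      exact div_le_div₀ (by norm_num) (by linarith) (by positivity) huu
    calc |(r * y - x) * (r * x - y) / (1 - r ^ 2) ^ 2 + r / (1 - r ^ 2)|
        ≤ |(r * y - x) * (r * x - y) / (1 - r ^ 2) ^ 2| + |r / (1 - r ^ 2)| := abs_add_le _ _
      _ ≤ 2 * ((1 + x ^ 2) * (1 + y ^ 2)) / (1 - c0 ^ 2) ^ 2 + 1 / (1 - c0 ^ 2) := by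
          linarith
      _ ≤ (2 / (1 - c0 ^ 2) ^ 2 + 1 / (1 - c0 ^ 2)) * ((1 + x ^ 2) * (1 + y ^ 2)) := by
          have e1 : 1 / (1 - c0 ^ 2) ≤ 1 / (1 - c0 ^ 2) * ((1 + x ^ 2) * (1 + y ^ 2)) :=
            le_mul_of_one_le_right (by positivity) hP1
          have e2 : 2 * ((1 + x ^ 2) * (1 + y ^ 2)) / (1 - c0 ^ 2) ^ 2 =
              2 / (1 - c0 ^ 2) ^ 2 * ((1 + x ^ 2) * (1 + y ^ 2)) := by ring
          linarith [e2.le, e2.ge]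
  calc |bvnr r x y| = bvn r x y * |(r * y - x) * (r * x - y) / (1 - r ^ 2) ^ 2 + r / (1 - r ^ 2)| := by
        rw [bvnr, abs_mul, abs_of_nonneg (bvn_nonneg r x y)]
    _ ≤ ((2 * Real.pi * Real.sqrt (1 - c0 ^ 2))⁻¹ *
          (Real.exp (-((1 - c0) / 2 * x ^ 2)) * Real.exp (-((1 - c0) / 2 * y ^ 2)))) *
        ((2 / (1 - c0 ^ 2) ^ 2 + 1 / (1 - c0 ^ 2)) * ((1 + x ^ 2) * (1 + y ^ 2))) :=
        mul_le_mul (bvn_le h1 hr x y) hexpr (abs_nonneg _) (by positivity)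
    _ = _ := by ring

lemma bvnx_abs_le {c0 r : ℝ} (h1 : c0 < 1) (hr : |r| ≤ c0) (x y : ℝ) :
    |bvn r x y * ((r * y - x) / (1 - r ^ 2))| ≤
      ((2 * Real.pi * Real.sqrt (1 - c0 ^ 2))⁻¹ * (1 / (1 - c0 ^ 2))) *
        ((1 + x ^ 2) * Real.exp (-((1 - c0) / 2 * x ^ 2)) *
          ((1 + y ^ 2) * Real.exp (-((1 - c0) / 2 * y ^ 2)))) := by
  have hc00 : 0 ≤ c0 := (abs_nonneg r).trans hr
  have hr1 : |r| < 1 := lt_of_le_of_lt hr h1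
  have hu : 0 < 1 - r ^ 2 := one_sub_sq_pos hr1
  have hu0 : 0 < 1 - c0 ^ 2 := by nlinarith
  have huu : 1 - c0 ^ 2 ≤ 1 - r ^ 2 := by nlinarith [sq_abs r, abs_nonneg r]
  have hP1 : (1:ℝ) ≤ (1 + x ^ 2) * (1 + y ^ 2) := by nlinarith [sq_nonneg x, sq_nonneg y]
  have hnum : |r * y - x| ≤ (1 + x ^ 2) * (1 + y ^ 2) := by
    calc |r * y - x| ≤ |r * y| + |x| := abs_sub _ _
      _ ≤ |y| + |x| := by
          rw [abs_mul]; nlinarith [abs_nonneg y, abs_nonneg x]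
      _ ≤ (1 + x ^ 2) * (1 + y ^ 2) := by
          nlinarith [sq_abs x, sq_abs y, abs_nonneg x, abs_nonneg y,
            sq_nonneg (|x| - 1), sq_nonneg (|y| - 1), sq_nonneg (|x| * |y|)]
  have hlin : |(r * y - x) / (1 - r ^ 2)| ≤ (1 + x ^ 2) * (1 + y ^ 2) / (1 - c0 ^ 2) := by
    rw [abs_div, abs_of_pos hu]
    exact div_le_div₀ (by positivity) hnum (by positivity) huu
  calc |bvn r x y * ((r * y - x) / (1 - r ^ 2))|
      = bvn r x y * |(r * y - x) / (1 - r ^ 2)| := by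
        rw [abs_mul, abs_of_nonneg (bvn_nonneg r x y)]
    _ ≤ ((2 * Real.pi * Real.sqrt (1 - c0 ^ 2))⁻¹ *
          (Real.exp (-((1 - c0) / 2 * x ^ 2)) * Real.exp (-((1 - c0) / 2 * y ^ 2)))) *
        ((1 + x ^ 2) * (1 + y ^ 2) / (1 - c0 ^ 2)) :=
        mul_le_mul (bvn_le h1 hr x y) hlin (abs_nonneg _) (by positivity)
    _ = _ := by ring

lemma integrable_g {c : ℝ} (hc : 0 < c) :
    Integrable (fun t : ℝ => (1 + t ^ 2) * Real.exp (-(c * t ^ 2))) := by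
  have h1 := integrable_exp_neg_mul_sq hc
  have h2' := integrable_rpow_mul_exp_neg_mul_sq hc (by norm_num : (-1:ℝ) < 2)
  have h2 : Integrable (fun t : ℝ => t ^ 2 * Real.exp (-c * t ^ 2)) := by
    refine h2'.congr (Filter.Eventually.of_forall fun t => ?_)
    simp only [show ((2:ℝ)) = ((2:ℕ):ℝ) by norm_num, Real.rpow_natCast, sq_abs]
  refine (h1.add h2).congr (Filter.Eventually.of_forall fun t => ?_)
  simp only [Pi.add_apply, neg_mul]
  ring

lemma tendsto_sq_atBot : Tendsto (fun t : ℝ => t ^ 2) atBot atTop := by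
  refine tendsto_atTop_mono' atBot ?_ tendsto_neg_atBot_atTop
  filter_upwards [eventually_le_atBot (-1 : ℝ)] with t ht
  nlinarith

lemma tendsto_g {c : ℝ} (hc : 0 < c) :
    Tendsto (fun t : ℝ => (1 + t ^ 2) * Real.exp (-(c * t ^ 2))) atBot (𝓝 0) := by
  have b := Real.tendsto_pow_mul_exp_neg_atTop_nhds_zero 1
  have a : Tendsto (fun u : ℝ => Real.exp (-u)) atTop (𝓝 0) :=
    Real.tendsto_exp_atBot.comp tendsto_neg_atTop_atBot
  have h1 : Tendsto (fun u : ℝ => Real.exp (-u) + (1 / c) * (u ^ 1 * Real.exp (-u)))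
      atTop (𝓝 0) := by
    have := a.add (b.const_mul (1 / c))
    simpa using this
  have h2 : Tendsto (fun t : ℝ => c * t ^ 2) atBot atTop :=
    Tendsto.const_mul_atTop hc tendsto_sq_atBot
  have h3 := h1.comp h2
  refine h3.congr fun t => ?_
  simp only [Function.comp_apply]
  field_simp

lemma continuous_bvn_p (r : ℝ) : Continuous (fun p : ℝ × ℝ => bvn r p.1 p.2) := by
  unfold bvn
  simp only [div_eq_mul_inv]
  fun_prop

lemma continuous_bvnr_p (r : ℝ) : Continuous (fun p : ℝ × ℝ => bvnr r p.1 p.2) := by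
  unfold bvnr bvn
  simp only [div_eq_mul_inv]
  fun_prop

lemma continuous_bvnr_y (r x : ℝ) : Continuous fun y => bvnr r x y := by
  unfold bvnr bvn
  simp only [div_eq_mul_inv]
  fun_prop

lemma continuous_bvnx (r y : ℝ) :
    Continuous fun x => bvn r x y * ((r * y - x) / (1 - r ^ 2)) := by
  unfold bvn
  simp only [div_eq_mul_inv]
  fun_prop


set_option maxHeartbeats 2000000 in
theorem ncdf2_deriv_corr (h k ρ : ℝ) (hρ : |ρ| < 1) :
    HasDerivAt (fun r => ncdf2 h k r)
      ((2 * Real.pi * Real.sqrt (1 - ρ ^ 2))⁻¹ *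
        Real.exp (-(h ^ 2 + k ^ 2 - 2 * ρ * h * k) / (2 * (1 - ρ ^ 2)))) ρ := by
  set c0 : ℝ := (1 + |ρ|) / 2 with hc0def
  have hρ1 : |ρ| < c0 := by rw [hc0def]; linarith
  have hc01 : c0 < 1 := by rw [hc0def]; linarith
  have hρc0 : |ρ| ≤ c0 := hρ1.le
  have hc00 : 0 ≤ c0 := (abs_nonneg ρ).trans hρc0
  have hu0 : 0 < 1 - c0 ^ 2 := by nlinarith
  have hc : 0 < (1 - c0) / 2 := by linarith
  set ε : ℝ := c0 - |ρ| with hεdef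
  have hε : 0 < ε := by rw [hεdef]; linarith
  have hball : ∀ r ∈ Metric.ball ρ ε, |r| ≤ c0 := by
    intro r hr'
    have h1 : |r - ρ| < ε := by
      simpa [Real.dist_eq] using Metric.mem_ball.1 hr'
    calc |r| = |r - ρ + ρ| := by ring_nf
      _ ≤ |r - ρ| + |ρ| := abs_add_le _ _
      _ ≤ c0 := by rw [hεdef] at h1; linarith
  set μ : Measure (ℝ × ℝ) := volume.restrict (Set.Iic h ×ˢ Set.Iic k) with hμdef
  -- integrable global bound
  have gint : Integrable (fun t : ℝ => (1 + t ^ 2) * Real.exp (-((1 - c0) / 2 * t ^ 2))) :=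
    integrable_g hc
  set K : ℝ := (2 * Real.pi * Real.sqrt (1 - c0 ^ 2))⁻¹ *
      (2 / (1 - c0 ^ 2) ^ 2 + 1 / (1 - c0 ^ 2)) with hKdef
  have bint : Integrable (fun p : ℝ × ℝ =>
      K * ((1 + p.1 ^ 2) * Real.exp (-((1 - c0) / 2 * p.1 ^ 2)) *
        ((1 + p.2 ^ 2) * Real.exp (-((1 - c0) / 2 * p.2 ^ 2))))) μ := by
    have h2 := (gint.mul_prod gint).const_mul K
    rw [← Measure.volume_eq_prod] at h2
    exact h2.restrict
  have hmeas : ∀ᶠ r in nhds ρ, AEStronglyMeasurable (fun p : ℝ × ℝ => bvn r p.1 p.2) μ :=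
    Filter.Eventually.of_forall fun r => (continuous_bvn_p r).aestronglyMeasurable
  have hint : Integrable (fun p : ℝ × ℝ => bvn ρ p.1 p.2) μ := by
    refine bint.mono' (continuous_bvn_p ρ).aestronglyMeasurable ?_
    refine Filter.Eventually.of_forall fun p => ?_
    have h1 := bvn_le hc01 hρc0 p.1 p.2
    have h2 : (0:ℝ) ≤ bvn ρ p.1 p.2 := bvn_nonneg _ _ _
    rw [Real.norm_eq_abs, abs_of_nonneg h2]
    refine h1.trans ?_
    have e1 : (1:ℝ) ≤ (1 + p.1 ^ 2) * (1 + p.2 ^ 2) := by nlinarith [sq_nonneg p.1, sq_nonneg p.2]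
    have e2 : (0:ℝ) < (2 * Real.pi * Real.sqrt (1 - c0 ^ 2))⁻¹ := by
      have := Real.pi_pos
      have := Real.sqrt_pos.2 hu0
      positivity
    have e4 : (1:ℝ) ≤ 1 / (1 - c0 ^ 2) := by
      rw [le_div_iff₀ hu0]; nlinarith
    have e5 : (0:ℝ) ≤ 2 / (1 - c0 ^ 2) ^ 2 := by positivity
    have e3 : (2 * Real.pi * Real.sqrt (1 - c0 ^ 2))⁻¹ ≤ K := by
      rw [hKdef]
      exact le_mul_of_one_le_right e2.le (by linarith)
    calc (2 * Real.pi * Real.sqrt (1 - c0 ^ 2))⁻¹ *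
          (Real.exp (-((1 - c0) / 2 * p.1 ^ 2)) * Real.exp (-((1 - c0) / 2 * p.2 ^ 2)))
        ≤ (2 * Real.pi * Real.sqrt (1 - c0 ^ 2))⁻¹ *
          ((1 + p.1 ^ 2) * Real.exp (-((1 - c0) / 2 * p.1 ^ 2)) *
            ((1 + p.2 ^ 2) * Real.exp (-((1 - c0) / 2 * p.2 ^ 2)))) := by
          refine mul_le_mul_of_nonneg_left ?_ e2.le
          calc Real.exp (-((1 - c0) / 2 * p.1 ^ 2)) * Real.exp (-((1 - c0) / 2 * p.2 ^ 2))
              = 1 * (Real.exp (-((1 - c0) / 2 * p.1 ^ 2)) *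
                  Real.exp (-((1 - c0) / 2 * p.2 ^ 2))) := (one_mul _).symm
            _ ≤ ((1 + p.1 ^ 2) * (1 + p.2 ^ 2)) *
                (Real.exp (-((1 - c0) / 2 * p.1 ^ 2)) * Real.exp (-((1 - c0) / 2 * p.2 ^ 2))) :=
                mul_le_mul_of_nonneg_right e1 (by positivity)
            _ = (1 + p.1 ^ 2) * Real.exp (-((1 - c0) / 2 * p.1 ^ 2)) *
                ((1 + p.2 ^ 2) * Real.exp (-((1 - c0) / 2 * p.2 ^ 2))) := by ring
      _ ≤ K * ((1 + p.1 ^ 2) * Real.exp (-((1 - c0) / 2 * p.1 ^ 2)) *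
            ((1 + p.2 ^ 2) * Real.exp (-((1 - c0) / 2 * p.2 ^ 2)))) :=
          mul_le_mul_of_nonneg_right e3 (by positivity)
  have hmeas' : AEStronglyMeasurable (fun p : ℝ × ℝ => bvnr ρ p.1 p.2) μ :=
    (continuous_bvnr_p ρ).aestronglyMeasurable
  have hbound : ∀ᵐ p ∂μ, ∀ r ∈ Metric.ball ρ ε, ‖bvnr r p.1 p.2‖ ≤
      K * ((1 + p.1 ^ 2) * Real.exp (-((1 - c0) / 2 * p.1 ^ 2)) *
        ((1 + p.2 ^ 2) * Real.exp (-((1 - c0) / 2 * p.2 ^ 2)))) := by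
    refine Filter.Eventually.of_forall fun p r hr' => ?_
    rw [Real.norm_eq_abs, hKdef]
    exact bvnr_abs_le hc01 (hball r hr') p.1 p.2
  have hdiff : ∀ᵐ p ∂μ, ∀ r ∈ Metric.ball ρ ε,
      HasDerivAt (fun r => bvn r p.1 p.2) (bvnr r p.1 p.2) r :=
    Filter.Eventually.of_forall fun p r hr' =>
      bvn_hasDerivAt_r p.1 p.2 (lt_of_le_of_lt (hball r hr') hc01)
  obtain ⟨hF'int, hD⟩ := hasDerivAt_integral_of_dominated_loc_of_deriv_le (Metric.ball_mem_nhds ρ hε) hmeas hint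
    hmeas' hbound bint hdiff
  -- identify the function
  have hfun : (fun r => ∫ p, bvn r p.1 p.2 ∂μ) = fun r => ncdf2 h k r := rfl
  -- compute the value of the derivative integral
  have hswap : ∫ p, bvnr ρ p.1 p.2 ∂μ = ∫ x in Set.Iic h, ∫ y in Set.Iic k, bvnr ρ x y := by
    rw [hμdef, Measure.volume_eq_prod]
    exact setIntegral_prod _ (by rw [← Measure.volume_eq_prod]; exact hF'int)
  have hinner : ∀ x : ℝ, ∫ y in Set.Iic k, bvnr ρ x y =
      bvn ρ x k * ((ρ * k - x) / (1 - ρ ^ 2)) := by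
    intro x
    have hcont : Continuous (fun y => bvnr ρ x y) := continuous_bvnr_y ρ x
    have hintOn : IntegrableOn (fun y => bvnr ρ x y) (Set.Iic k) := by
      refine ((gint.const_mul (K * ((1 + x ^ 2) * Real.exp (-((1 - c0) / 2 * x ^ 2))))).mono'
        hcont.aestronglyMeasurable ?_).integrableOn
      refine Filter.Eventually.of_forall fun y => ?_
      rw [Real.norm_eq_abs]
      have h1 : |bvnr ρ x y| ≤ K * ((1 + x ^ 2) * Real.exp (-((1 - c0) / 2 * x ^ 2)) *
          ((1 + y ^ 2) * Real.exp (-((1 - c0) / 2 * y ^ 2)))) := by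
        rw [hKdef]; exact bvnr_abs_le hc01 hρc0 x y
      refine h1.trans (le_of_eq (by ring))
    have htend : Tendsto (fun y => bvn ρ x y * ((ρ * y - x) / (1 - ρ ^ 2))) atBot (𝓝 0) := by
      apply squeeze_zero_norm (a := fun y : ℝ =>
        ((2 * Real.pi * Real.sqrt (1 - c0 ^ 2))⁻¹ * (1 / (1 - c0 ^ 2)) *
          ((1 + x ^ 2) * Real.exp (-((1 - c0) / 2 * x ^ 2)))) *
          ((1 + y ^ 2) * Real.exp (-((1 - c0) / 2 * y ^ 2))))
      · intro y
        rw [Real.norm_eq_abs]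
        exact (bvnx_abs_le hc01 hρc0 x y).trans (le_of_eq (by ring))
      · have := (tendsto_g hc).const_mul
          ((2 * Real.pi * Real.sqrt (1 - c0 ^ 2))⁻¹ * (1 / (1 - c0 ^ 2)) *
            ((1 + x ^ 2) * Real.exp (-((1 - c0) / 2 * x ^ 2))))
        simpa using this
    have := integral_Iic_of_hasDerivAt_of_tendsto'
      (fun y _ => bvnx_hasDerivAt_y hρ x y) hintOn htend
    simpa using this
  have houter : ∫ x in Set.Iic h, bvn ρ x k * ((ρ * k - x) / (1 - ρ ^ 2)) = bvn ρ h k := by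
    have hcont : Continuous (fun x => bvn ρ x k * ((ρ * k - x) / (1 - ρ ^ 2))) :=
      continuous_bvnx ρ k
    have hintOn : IntegrableOn (fun x => bvn ρ x k * ((ρ * k - x) / (1 - ρ ^ 2)))
        (Set.Iic h) := by
      refine ((gint.const_mul ((2 * Real.pi * Real.sqrt (1 - c0 ^ 2))⁻¹ * (1 / (1 - c0 ^ 2)) *
        ((1 + k ^ 2) * Real.exp (-((1 - c0) / 2 * k ^ 2))))).mono'
        hcont.aestronglyMeasurable ?_).integrableOn
      refine Filter.Eventually.of_forall fun x => ?_
      rw [Real.norm_eq_abs]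
      exact (bvnx_abs_le hc01 hρc0 x k).trans (le_of_eq (by ring))
    have htend : Tendsto (fun x => bvn ρ x k) atBot (𝓝 0) := by
      apply squeeze_zero_norm (a := fun x : ℝ =>
        ((2 * Real.pi * Real.sqrt (1 - c0 ^ 2))⁻¹ * Real.exp (-((1 - c0) / 2 * k ^ 2))) *
          Real.exp (-((1 - c0) / 2 * x ^ 2)))
      · intro x
        rw [Real.norm_eq_abs, abs_of_nonneg (bvn_nonneg _ _ _)]
        exact (bvn_le hc01 hρc0 x k).trans (le_of_eq (by ring))
      · have h2 : Tendsto (fun x : ℝ => -((1 - c0) / 2 * x ^ 2)) atBot atBot :=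
          tendsto_neg_atTop_atBot.comp (Tendsto.const_mul_atTop hc tendsto_sq_atBot)
        have h3 : Tendsto (fun x : ℝ => Real.exp (-((1 - c0) / 2 * x ^ 2))) atBot (𝓝 0) :=
          Real.tendsto_exp_atBot.comp h2
        have := h3.const_mul
          ((2 * Real.pi * Real.sqrt (1 - c0 ^ 2))⁻¹ * Real.exp (-((1 - c0) / 2 * k ^ 2)))
        simpa using this
    have := integral_Iic_of_hasDerivAt_of_tendsto'
      (fun x _ => bvn_hasDerivAt_x hρ k x) hintOn htend
    simpa using this
  have hval : ∫ p, bvnr ρ p.1 p.2 ∂μ =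
      (2 * Real.pi * Real.sqrt (1 - ρ ^ 2))⁻¹ *
        Real.exp (-(h ^ 2 + k ^ 2 - 2 * ρ * h * k) / (2 * (1 - ρ ^ 2))) := by
    rw [hswap]
    calc ∫ x in Set.Iic h, ∫ y in Set.Iic k, bvnr ρ x y
        = ∫ x in Set.Iic h, bvn ρ x k * ((ρ * k - x) / (1 - ρ ^ 2)) := by
          exact setIntegral_congr_fun measurableSet_Iic fun x _ => hinner x
      _ = bvn ρ h k := houter
      _ = _ := rfl
  rw [hfun, hval] at hD
  exact hD
end

section
/- Multivariate Stein's lemma: if (X₁, …, Xₙ) is a multivariate normal random vector and f : ℝⁿ → ℝ is continuously differentiable with f and its partial derivatives of at most polynomial growth, then E[(X₁ - E[X₁]) f(X₁, …, Xₙ)] = Σᵢ Cov(X₁, Xᵢ) E[∂f/∂xᵢ (X₁, …, Xₙ)]. -/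
open MeasureTheory ProbabilityTheory Real
open scoped NNReal

open Filter Set
open scoped NNReal ENNReal

noncomputable section

lemma pdf01 (x : ℝ) :
    gaussianPDFReal 0 1 x = (Real.sqrt (2 * π))⁻¹ * Real.exp (-x ^ 2 / 2) := by
  simp [gaussianPDFReal_def]

lemma integral_gauss01 (h : ℝ → ℝ) :
    ∫ x, h x ∂(gaussianReal 0 1) = ∫ x, gaussianPDFReal 0 1 x * h x := by
  rw [gaussianReal_of_var_ne_zero 0 one_ne_zero, gaussianPDF_def]
  have : (fun x => ENNReal.ofReal (gaussianPDFReal 0 1 x))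
      = fun x => ((gaussianPDFReal 0 1 x).toNNReal : ℝ≥0∞) := rfl
  rw [this, integral_withDensity_eq_integral_smul
    (f := fun x => (gaussianPDFReal 0 1 x).toNNReal)
    ((measurable_gaussianPDFReal 0 1).real_toNNReal) h]
  congr 1 with x
  simp [NNReal.smul_def, Real.coe_toNNReal _ (gaussianPDFReal_nonneg 0 1 x)]

lemma integrable_gauss01_iff (h : ℝ → ℝ) :
    Integrable h (gaussianReal 0 1)
      ↔ Integrable (fun x => gaussianPDFReal 0 1 x * h x) := by
  rw [gaussianReal_of_var_ne_zero 0 one_ne_zero, gaussianPDF_def]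
  have : (fun x => ENNReal.ofReal (gaussianPDFReal 0 1 x))
      = fun x => ((gaussianPDFReal 0 1 x).toNNReal : ℝ≥0∞) := rfl
  rw [this, integrable_withDensity_iff_integrable_smul
    ((measurable_gaussianPDFReal 0 1).real_toNNReal)]
  constructor <;> intro hi <;> refine hi.congr (ae_of_all _ fun x => ?_) <;>
    simp [NNReal.smul_def, Real.coe_toNNReal _ (gaussianPDFReal_nonneg 0 1 x)]

end
noncomputable section

lemma integrable_abs_pow_mul_exp (m : ℕ) {b : ℝ} (hb : 0 < b) :
    Integrable (fun x : ℝ => |x| ^ m * Real.exp (-b * x ^ 2)) := by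
  have hm : (-1 : ℝ) < (m : ℝ) :=
    lt_of_lt_of_le neg_one_lt_zero (Nat.cast_nonneg m)
  have h1 : IntegrableOn (fun x : ℝ => |x| ^ m * Real.exp (-b * x ^ 2)) (Ioi 0) := by
    refine (integrableOn_rpow_mul_exp_neg_mul_sq hb hm).congr_fun
      (fun x hx => ?_) measurableSet_Ioi
    beta_reduce
    rw [Real.rpow_natCast, abs_of_pos hx]
  have h2 : IntegrableOn (fun x : ℝ => |x| ^ m * Real.exp (-b * x ^ 2)) (Iic 0) := by
    rw [← (Measure.measurePreserving_neg (volume : Measure ℝ)).integrableOn_comp_preimage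
        (Homeomorph.neg ℝ).measurableEmbedding]
    simp only [Function.comp_def, abs_neg, neg_sq, neg_preimage, neg_Iic, neg_zero]
    rw [integrableOn_Ici_iff_integrableOn_Ioi]
    exact h1
  rw [← integrableOn_univ, ← Set.Iic_union_Ioi (a := (0:ℝ)), integrableOn_union]
  exact ⟨h2, h1⟩

lemma integrable_one_add_abs_pow_exp (k : ℕ) :
    Integrable (fun x : ℝ => (1 + |x|) ^ k * Real.exp (-x ^ 2 / 2)) := by
  have hexp : Integrable (fun x : ℝ => Real.exp (-x ^ 2 / 2)) := by
    refine (integrable_exp_neg_mul_sq (b := (1/2 : ℝ)) (by norm_num)).congr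
      (ae_of_all _ fun x => ?_)
    ring_nf
  have habs : Integrable (fun x : ℝ => |x| ^ k * Real.exp (-x ^ 2 / 2)) := by
    refine (integrable_abs_pow_mul_exp k (b := (1/2 : ℝ)) (by norm_num)).congr
      (ae_of_all _ fun x => ?_)
    ring_nf
  refine ((hexp.const_mul ((2:ℝ)^k)).add (habs.const_mul ((2:ℝ)^k))).mono'
    (((continuous_const.add continuous_abs).pow k).mul
      ((continuous_pow 2).neg.div_const 2).rexp).aestronglyMeasurable
    (ae_of_all _ fun x => ?_)
  have h0 : (0:ℝ) ≤ |x| := abs_nonneg x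
  have hkey : (1 + |x|) ^ k ≤ 2 ^ k * (1 + |x| ^ k) := by
    rcases le_total |x| 1 with h | h
    · calc (1 + |x|) ^ k ≤ 2 ^ k := pow_le_pow_left₀ (by positivity) (by linarith) k
        _ ≤ 2 ^ k * (1 + |x| ^ k) := le_mul_of_one_le_right (by positivity)
            (by nlinarith [pow_nonneg h0 k])
    · calc (1 + |x|) ^ k ≤ (2 * |x|) ^ k := pow_le_pow_left₀ (by positivity) (by linarith) k
        _ = 2 ^ k * |x| ^ k := mul_pow 2 |x| k
        _ ≤ 2 ^ k * (1 + |x| ^ k) := by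
            have : (0:ℝ) < 2 ^ k := by positivity
            nlinarith [pow_nonneg h0 k]
  rw [Real.norm_of_nonneg (by positivity)]
  calc (1 + |x|) ^ k * Real.exp (-x ^ 2 / 2)
      ≤ (2 ^ k * (1 + |x| ^ k)) * Real.exp (-x ^ 2 / 2) :=
        mul_le_mul_of_nonneg_right hkey (Real.exp_pos _).le
    _ = 2 ^ k * Real.exp (-x ^ 2 / 2) + 2 ^ k * (|x| ^ k * Real.exp (-x ^ 2 / 2)) := by ring

lemma integrable_gauss_poly (k : ℕ) :
    Integrable (fun x : ℝ => (1 + |x|) ^ k) (gaussianReal 0 1) := by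
  rw [integrable_gauss01_iff]
  refine ((integrable_one_add_abs_pow_exp k).const_mul ((Real.sqrt (2 * π))⁻¹)).congr
    (ae_of_all _ fun x => ?_)
  simp only [pdf01]; ring

lemma integrable_pi_prod {m : ℕ} {g : ℝ → ℝ} (hgm : Continuous g)
    (hg : Integrable g (gaussianReal 0 1)) :
    Integrable (fun w : Fin m → ℝ => ∏ i, g (w i))
      (Measure.pi fun _ : Fin m => gaussianReal 0 1) := by
  induction m with
  | zero =>
      simp only [Finset.univ_eq_empty, Finset.prod_empty]
      exact integrable_const 1
  | succ m ih =>
      have hmp := (measurePreserving_piFinSuccAbove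
        (fun _ : Fin (m+1) => gaussianReal 0 1) 0).symm
      rw [← hmp.integrable_comp_emb (MeasurableEquiv.measurableEmbedding _)]
      simp_rw [MeasurableEquiv.piFinSuccAbove_symm_apply, Fin.insertNthEquiv,
        Fin.prod_univ_succ, Fin.insertNth_zero]
      simp only [Fin.zero_succAbove, Equiv.coe_fn_mk, Function.comp_def,
        Fin.cons_zero, Fin.cons_succ]
      exact Integrable.mul_prod hg ih

lemma one_add_sum_le_prod {ι : Type*} (s : Finset ι) (a : ι → ℝ) (ha : ∀ i, 0 ≤ a i) :
    1 + ∑ i ∈ s, a i ≤ ∏ i ∈ s, (1 + a i) := by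
  induction s using Finset.cons_induction with
  | empty => simp
  | cons i s his ih =>
      rw [Finset.prod_cons, Finset.sum_cons]
      have h1 : (0:ℝ) ≤ ∑ j ∈ s, a j := Finset.sum_nonneg fun j _ => ha j
      nlinarith [ha i, ih]

lemma integrable_pi_poly {m : ℕ} (k : ℕ) :
    Integrable (fun w : Fin m → ℝ => (1 + ‖w‖) ^ k)
      (Measure.pi fun _ : Fin m => gaussianReal 0 1) := by
  have hprod := integrable_pi_prod (m := m)
    (g := fun x => (1 + |x|) ^ k)
    ((continuous_const.add continuous_abs).pow k) (integrable_gauss_poly k)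
  refine hprod.mono'
    ((continuous_const.add continuous_norm).pow k).aestronglyMeasurable
    (ae_of_all _ fun w => ?_)
  rw [Real.norm_of_nonneg (by positivity)]
  have h1 : ‖w‖ ≤ ∑ i, ‖w i‖ := by
    refine (pi_norm_le_iff_of_nonneg (Finset.sum_nonneg fun i _ => norm_nonneg _)).2
      fun i => Finset.single_le_sum (fun j _ => norm_nonneg (w j)) (Finset.mem_univ i)
  simp only [Real.norm_eq_abs] at h1
  have h2 : 1 + ‖w‖ ≤ ∏ i, (1 + |w i|) := by
    refine le_trans (by linarith) (one_add_sum_le_prod Finset.univ _ fun i => abs_nonneg _)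
  calc (1 + ‖w‖) ^ k ≤ (∏ i, (1 + |w i|)) ^ k :=
        pow_le_pow_left₀ (by positivity) h2 k
    _ = ∏ i, (1 + |w i|) ^ k := by rw [Finset.prod_pow]

lemma integrable_of_poly_growth {m : ℕ} {F : (Fin m → ℝ) → ℝ} (hF : Continuous F)
    {C : ℝ} {k : ℕ} (hb : ∀ w, |F w| ≤ C * (1 + ‖w‖) ^ k) :
    Integrable F (Measure.pi fun _ : Fin m => gaussianReal 0 1) := by
  refine ((integrable_pi_poly (m := m) k).const_mul C).mono' hF.aestronglyMeasurable
    (ae_of_all _ fun w => ?_)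
  rw [Real.norm_eq_abs]
  exact hb w

end
noncomputable section

lemma one_add_abs_pow_le (x : ℝ) (k : ℕ) :
    (1 + |x|) ^ k ≤ 2 ^ k * (1 + |x| ^ k) := by
  have h0 : (0:ℝ) ≤ |x| := abs_nonneg x
  rcases le_total |x| 1 with h | h
  · calc (1 + |x|) ^ k ≤ 2 ^ k := pow_le_pow_left₀ (by positivity) (by linarith) k
      _ ≤ 2 ^ k * (1 + |x| ^ k) := le_mul_of_one_le_right (by positivity)
          (by nlinarith [pow_nonneg h0 k])
  · calc (1 + |x|) ^ k ≤ (2 * |x|) ^ k := pow_le_pow_left₀ (by positivity) (by linarith) k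
      _ = 2 ^ k * |x| ^ k := mul_pow 2 |x| k
      _ ≤ 2 ^ k * (1 + |x| ^ k) := by
          have h2 : (0:ℝ) < 2 ^ k := by positivity
          nlinarith [pow_nonneg h0 k]

lemma tendsto_one_add_abs_pow_exp (k : ℕ) :
    Filter.Tendsto (fun x : ℝ => (1 + |x|) ^ k * Real.exp (-x ^ 2 / 2))
      (Filter.cocompact ℝ) (nhds 0) := by
  have T : ∀ m : ℕ, Filter.Tendsto (fun x : ℝ => |x| ^ m * Real.exp (-x ^ 2 / 2))
      (Filter.cocompact ℝ) (nhds 0) := by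
    intro m
    have := tendsto_rpow_abs_mul_exp_neg_mul_sq_cocompact (a := (1/2 : ℝ)) (by norm_num) m
    refine this.congr fun x => ?_
    rw [Real.rpow_natCast]
    ring_nf
  have TG : Filter.Tendsto
      (fun x : ℝ => 2 ^ k * Real.exp (-x ^ 2 / 2) + 2 ^ k * (|x| ^ k * Real.exp (-x ^ 2 / 2)))
      (Filter.cocompact ℝ) (nhds 0) := by
    have h0 := ((T 0).const_mul ((2:ℝ) ^ k)).add ((T k).const_mul ((2:ℝ) ^ k))
    simpa using h0
  refine squeeze_zero_norm (fun x => ?_) TG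
  rw [Real.norm_of_nonneg (by positivity)]
  calc (1 + |x|) ^ k * Real.exp (-x ^ 2 / 2)
      ≤ (2 ^ k * (1 + |x| ^ k)) * Real.exp (-x ^ 2 / 2) :=
        mul_le_mul_of_nonneg_right (one_add_abs_pow_le x k) (Real.exp_pos _).le
    _ = 2 ^ k * Real.exp (-x ^ 2 / 2) + 2 ^ k * (|x| ^ k * Real.exp (-x ^ 2 / 2)) := by ring

lemma stein1 {h h' : ℝ → ℝ} (hd : ∀ x, HasDerivAt h (h' x) x)
    (hc' : Continuous h') {C : ℝ} {k : ℕ}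
    (hb : ∀ x, |h x| ≤ C * (1 + |x|) ^ k) (hb' : ∀ x, |h' x| ≤ C * (1 + |x|) ^ k) :
    ∫ x, x * h x ∂(gaussianReal 0 1) = ∫ x, h' x ∂(gaussianReal 0 1) := by
  have hC : 0 ≤ C := le_trans (abs_nonneg _) (by simpa using hb 0)
  set c : ℝ := (Real.sqrt (2 * π))⁻¹ with hc_def
  have hc0 : 0 < c := by rw [hc_def]; positivity
  set ψ : ℝ → ℝ := fun x => c * Real.exp (-x ^ 2 / 2) with hψ_def
  have hψ_eq : ∀ x, gaussianPDFReal 0 1 x = ψ x := fun x => pdf01 x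
  have hψ_pos : ∀ x, 0 < ψ x := fun x => by positivity
  have hψc : Continuous ψ := continuous_const.mul ((continuous_pow 2).neg.div_const 2).rexp
  have hdiff : Differentiable ℝ h := fun x => (hd x).differentiableAt
  have hhc : Continuous h := hdiff.continuous
  have hψd : ∀ x, HasDerivAt ψ (-x * ψ x) x := by
    intro x
    have h1 : HasDerivAt (fun x : ℝ => -x ^ 2 / 2) (-x) x := by
      have := ((hasDerivAt_pow 2 x).neg.div_const 2)
      refine this.congr_deriv ?_
      simp
      ring
    have h2 := (h1.exp).const_mul c
    refine h2.congr_deriv ?_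
    simp only [hψ_def]
    ring
  set F : ℝ → ℝ := fun x => h x * ψ x with hF_def
  set F' : ℝ → ℝ := fun x => h' x * ψ x - x * (h x * ψ x) with hF'_def
  have hFd : ∀ x, HasDerivAt F (F' x) x := by
    intro x
    have := (hd x).mul (hψd x)
    refine this.congr_deriv ?_
    simp only [hF'_def]
    ring
  -- pointwise bounds
  have hbF' : ∀ x, |F' x| ≤ 2 * C * c * ((1 + |x|) ^ (k + 1) * Real.exp (-x ^ 2 / 2)) := by
    intro x
    have hE : (0:ℝ) < Real.exp (-x ^ 2 / 2) := Real.exp_pos _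
    have h1 : (1:ℝ) ≤ 1 + |x| := by have := abs_nonneg x; linarith
    have hmono : (1 + |x|) ^ k ≤ (1 + |x|) ^ (k + 1) :=
      pow_le_pow_right₀ h1 (Nat.le_succ k)
    have e1 : |h' x * ψ x| ≤ C * (1 + |x|) ^ (k + 1) * (c * Real.exp (-x ^ 2 / 2)) := by
      rw [abs_mul, abs_of_pos (hψ_pos x)]
      calc |h' x| * ψ x ≤ (C * (1 + |x|) ^ k) * ψ x :=
            mul_le_mul_of_nonneg_right (hb' x) (hψ_pos x).le
        _ ≤ (C * (1 + |x|) ^ (k+1)) * ψ x := by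
            refine mul_le_mul_of_nonneg_right ?_ (hψ_pos x).le
            exact mul_le_mul_of_nonneg_left hmono hC
        _ = C * (1 + |x|) ^ (k + 1) * (c * Real.exp (-x ^ 2 / 2)) := by rw [hψ_def]
    have e2 : |x * (h x * ψ x)| ≤ C * (1 + |x|) ^ (k + 1) * (c * Real.exp (-x ^ 2 / 2)) := by
      rw [abs_mul, abs_mul, abs_of_pos (hψ_pos x)]
      calc |x| * (|h x| * ψ x) ≤ (1 + |x|) * ((C * (1 + |x|) ^ k) * ψ x) := by
            refine mul_le_mul (by linarith) ?_ (by positivity) (by linarith)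
            exact mul_le_mul_of_nonneg_right (hb x) (hψ_pos x).le
        _ = C * ((1 + |x|) * (1 + |x|) ^ k) * ψ x := by ring
        _ = C * (1 + |x|) ^ (k + 1) * ψ x := by rw [← pow_succ']
        _ = C * (1 + |x|) ^ (k + 1) * (c * Real.exp (-x ^ 2 / 2)) := by rw [hψ_def]
    calc |F' x| ≤ |h' x * ψ x| + |x * (h x * ψ x)| := abs_sub _ _
      _ ≤ 2 * C * c * ((1 + |x|) ^ (k + 1) * Real.exp (-x ^ 2 / 2)) := by
          rw [hF'_def] at *
          nlinarith [e1, e2]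
  have hF'c : Continuous F' :=
    (hc'.mul hψc).sub (continuous_id.mul (hhc.mul hψc))
  have hF'int : Integrable F' := by
    refine ((integrable_one_add_abs_pow_exp (k+1)).const_mul (2 * C * c)).mono'
      hF'c.aestronglyMeasurable (ae_of_all _ fun x => ?_)
    rw [Real.norm_eq_abs]
    exact hbF' x
  -- limits at infinity
  have hbound : ∀ x, ‖F x‖ ≤ C * c * ((1 + |x|) ^ k * Real.exp (-x ^ 2 / 2)) := by
    intro x
    rw [Real.norm_eq_abs, hF_def]
    simp only
    rw [abs_mul, abs_of_pos (hψ_pos x), hψ_def]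
    calc |h x| * (c * Real.exp (-x ^ 2 / 2))
        ≤ (C * (1 + |x|) ^ k) * (c * Real.exp (-x ^ 2 / 2)) :=
          mul_le_mul_of_nonneg_right (hb x) (by positivity)
      _ = C * c * ((1 + |x|) ^ k * Real.exp (-x ^ 2 / 2)) := by ring
  have hcoc : Filter.Tendsto F (Filter.cocompact ℝ) (nhds 0) :=
    squeeze_zero_norm hbound (by simpa using (tendsto_one_add_abs_pow_exp k).const_mul (C * c))
  have htop : Filter.Tendsto F Filter.atTop (nhds 0) :=
    hcoc.mono_left (by rw [cocompact_eq_atBot_atTop]; exact le_sup_right)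
  have hbot : Filter.Tendsto F Filter.atBot (nhds 0) :=
    hcoc.mono_left (by rw [cocompact_eq_atBot_atTop]; exact le_sup_left)
  -- the integral of F' vanishes
  have h1 : ∫ x in Set.Iic (0:ℝ), F' x = F 0 - 0 :=
    MeasureTheory.integral_Iic_of_hasDerivAt_of_tendsto'
      (fun x _ => hFd x) hF'int.integrableOn hbot
  have h2 : ∫ x in Set.Ioi (0:ℝ), F' x = 0 - F 0 :=
    MeasureTheory.integral_Ioi_of_hasDerivAt_of_tendsto'
      (fun x _ => hFd x) hF'int.integrableOn htop
  have h3 := MeasureTheory.integral_add_compl (measurableSet_Iic (a := (0:ℝ))) hF'int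
  rw [Set.compl_Iic] at h3
  have hF'zero : ∫ x, F' x = 0 := by
    rw [← h3, h1, h2]; ring
  -- transfer to the Gaussian measure
  have int1 : Integrable (fun x => ψ x * h' x) := by
    refine ((integrable_one_add_abs_pow_exp k).const_mul (C * c)).mono'
      (hψc.mul hc').aestronglyMeasurable (ae_of_all _ fun x => ?_)
    rw [Real.norm_eq_abs, abs_mul, abs_of_pos (hψ_pos x), hψ_def]
    calc c * Real.exp (-x ^ 2 / 2) * |h' x|
        ≤ c * Real.exp (-x ^ 2 / 2) * (C * (1 + |x|) ^ k) :=
          mul_le_mul_of_nonneg_left (hb' x) (by positivity)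
      _ = C * c * ((1 + |x|) ^ k * Real.exp (-x ^ 2 / 2)) := by ring
  have int2 : Integrable (fun x => ψ x * (x * h x)) := by
    have e : (fun x => ψ x * (x * h x)) = fun x => ψ x * h' x - F' x := by
      funext x
      simp only [hF'_def]
      ring
    rw [e]
    exact int1.sub hF'int
  rw [integral_gauss01, integral_gauss01]
  have e1 : (fun x => gaussianPDFReal 0 1 x * (x * h x)) = fun x => ψ x * (x * h x) :=
    funext fun x => by rw [hψ_eq]
  have e2 : (fun x => gaussianPDFReal 0 1 x * h' x) = fun x => ψ x * h' x :=
    funext fun x => by rw [hψ_eq]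
  rw [e1, e2]
  have hz : ∫ x, (ψ x * h' x - ψ x * (x * h x)) = 0 := by
    refine Eq.trans ?_ hF'zero
    congr 1
    funext x
    simp only [hF'_def]
    ring
  rw [integral_sub int1 int2] at hz
  linarith


end
noncomputable section

lemma insertNth_cases {m : ℕ} (j i : Fin (m+1)) : i = j ∨ ∃ k, j.succAbove k = i := by
  rcases eq_or_ne i j with h | h
  · exact Or.inl h
  · exact Or.inr (Fin.exists_succAbove_eq h)

lemma insertNth_eq_affine {m : ℕ} (j : Fin (m+1)) (y : Fin m → ℝ) (t : ℝ) :
    Fin.insertNth (α := fun _ => ℝ) j t y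
      = Fin.insertNth (α := fun _ => ℝ) j 0 y + t • (Pi.single j 1 : Fin (m+1) → ℝ) := by
  funext i
  rcases insertNth_cases j i with rfl | ⟨k, rfl⟩
  · simp
  · simp [Fin.insertNth_apply_succAbove, Pi.single_eq_of_ne (Fin.succAbove_ne j k)]

lemma insertNth_norm_le {m : ℕ} (j : Fin (m+1)) (y : Fin m → ℝ) (t : ℝ) :
    ‖Fin.insertNth (α := fun _ => ℝ) j t y‖ ≤ |t| + ‖y‖ := by
  refine (pi_norm_le_iff_of_nonneg (by positivity)).2 fun i => ?_
  rcases insertNth_cases j i with rfl | ⟨k, rfl⟩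
  · simp only [Fin.insertNth_apply_same, Real.norm_eq_abs]
    linarith [norm_nonneg y]
  · rw [Fin.insertNth_apply_succAbove]
    calc ‖y k‖ ≤ ‖y‖ := norm_le_pi_norm y k
      _ ≤ |t| + ‖y‖ := by linarith [abs_nonneg t]

lemma norm_single_le {m : ℕ} (j : Fin (m+1)) :
    ‖(Pi.single j 1 : Fin (m+1) → ℝ)‖ ≤ 1 := by
  refine (pi_norm_le_iff_of_nonneg zero_le_one).2 fun i => ?_
  rcases eq_or_ne i j with rfl | h
  · simp
  · simp [Pi.single_eq_of_ne h]

lemma stein_pi {m : ℕ} (j : Fin (m+1)) {g : (Fin (m+1) → ℝ) → ℝ} (hg : ContDiff ℝ 1 g)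
    {C : ℝ} {k : ℕ}
    (hbg : ∀ x, |g x| ≤ C * (1 + ‖x‖) ^ k)
    (hbg' : ∀ x, ‖fderiv ℝ g x‖ ≤ C * (1 + ‖x‖) ^ k) :
    ∫ w, w j * g w ∂(Measure.pi fun _ : Fin (m+1) => gaussianReal 0 1)
      = ∫ w, fderiv ℝ g w (Pi.single j 1)
          ∂(Measure.pi fun _ : Fin (m+1) => gaussianReal 0 1) := by
  have hC : 0 ≤ C := le_trans (abs_nonneg _) (by simpa using hbg 0)
  set Γ := Measure.pi fun _ : Fin (m+1) => gaussianReal 0 1 with hΓ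
  set Γ' := Measure.pi fun _ : Fin m => gaussianReal 0 1 with hΓ'
  have hgc : Continuous g := hg.continuous
  have hg'c : Continuous (fderiv ℝ g) := hg.continuous_fderiv one_ne_zero
  have hgdiff : Differentiable ℝ g := hg.differentiable one_ne_zero
  have hF1c : Continuous fun w : Fin (m+1) → ℝ => w j * g w := (continuous_apply j).mul hgc
  have hF1b : ∀ w : Fin (m+1) → ℝ, |w j * g w| ≤ C * (1 + ‖w‖) ^ (k+1) := by
    intro w
    rw [abs_mul]
    have h1 : |w j| ≤ 1 + ‖w‖ := by
      have := norm_le_pi_norm w j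
      rw [Real.norm_eq_abs] at this
      linarith
    calc |w j| * |g w| ≤ (1 + ‖w‖) * (C * (1 + ‖w‖) ^ k) :=
          mul_le_mul h1 (hbg w) (abs_nonneg _) (by positivity)
      _ = C * ((1 + ‖w‖) * (1 + ‖w‖) ^ k) := by ring
      _ = C * (1 + ‖w‖) ^ (k+1) := by rw [← pow_succ']
  have hF1int : Integrable (fun w : Fin (m+1) → ℝ => w j * g w) Γ :=
    integrable_of_poly_growth hF1c hF1b
  have hF2c : Continuous fun w : Fin (m+1) → ℝ => fderiv ℝ g w (Pi.single j 1) :=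
    hg'c.clm_apply continuous_const
  have hF2b : ∀ w : Fin (m+1) → ℝ, |fderiv ℝ g w (Pi.single j 1)| ≤ C * (1 + ‖w‖) ^ k := by
    intro w
    rw [← Real.norm_eq_abs]
    calc ‖fderiv ℝ g w (Pi.single j 1)‖
        ≤ ‖fderiv ℝ g w‖ * ‖(Pi.single j 1 : Fin (m+1) → ℝ)‖ :=
          (fderiv ℝ g w).le_opNorm _
      _ ≤ ‖fderiv ℝ g w‖ * 1 :=
          mul_le_mul_of_nonneg_left (norm_single_le j) (norm_nonneg _)
      _ = ‖fderiv ℝ g w‖ := mul_one _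
      _ ≤ C * (1 + ‖w‖) ^ k := hbg' w
  have hF2int : Integrable (fun w : Fin (m+1) → ℝ => fderiv ℝ g w (Pi.single j 1)) Γ :=
    integrable_of_poly_growth hF2c hF2b
  set e := MeasurableEquiv.piFinSuccAbove (fun _ : Fin (m+1) => ℝ) j with he
  have hmp := measurePreserving_piFinSuccAbove (fun _ : Fin (m+1) => gaussianReal 0 1) j
  have key : ∀ F : (Fin (m+1) → ℝ) → ℝ, Integrable F Γ →
      ∫ w, F w ∂Γ = ∫ y, (∫ t, F (Fin.insertNth (α := fun _ => ℝ) j t y) ∂(gaussianReal 0 1)) ∂Γ' := by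
    intro F hF
    have h1 : ∫ w, F w ∂Γ
        = ∫ z, F (e.symm z) ∂((gaussianReal 0 1).prod Γ') := by
      rw [← hmp.map_eq, MeasureTheory.integral_map_equiv]
      refine integral_congr_ae (ae_of_all _ fun w => ?_)
      show F w = F (e.symm (e w))
      rw [e.symm_apply_apply]
    have hFi : Integrable (fun z => F (e.symm z)) ((gaussianReal 0 1).prod Γ') := by
      rw [← hmp.map_eq, MeasureTheory.integrable_map_equiv]
      refine hF.congr (ae_of_all _ fun w => ?_)
      show F w = F (e.symm (e w))
      rw [e.symm_apply_apply]
    rw [h1, MeasureTheory.integral_prod_symm _ hFi]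
    congr 1
  rw [key _ hF1int, key _ hF2int]
  refine integral_congr_ae (ae_of_all _ fun y => ?_)
  have haff : (fun t : ℝ => Fin.insertNth (α := fun _ => ℝ) j t y)
      = fun t => Fin.insertNth (α := fun _ => ℝ) j 0 y + t • (Pi.single j 1 : Fin (m+1) → ℝ) :=
    funext fun t => insertNth_eq_affine j y t
  have hLd : ∀ t : ℝ, HasDerivAt (fun t : ℝ => Fin.insertNth (α := fun _ => ℝ) j t y)
      (Pi.single j 1 : Fin (m+1) → ℝ) t := by
    intro t
    rw [haff]
    have h0 : HasDerivAt (fun t : ℝ => Fin.insertNth (α := fun _ => ℝ) j 0 y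
        + t • (Pi.single j 1 : Fin (m+1) → ℝ))
        ((1:ℝ) • (Pi.single j 1 : Fin (m+1) → ℝ)) t :=
      ((hasDerivAt_id t).smul_const _).const_add _
    simpa using h0
  have hLc : Continuous fun t : ℝ => Fin.insertNth (α := fun _ => ℝ) j t y := by
    rw [haff]
    exact continuous_const.add (continuous_id.smul continuous_const)
  have hd : ∀ t : ℝ, HasDerivAt (fun t => g (Fin.insertNth (α := fun _ => ℝ) j t y))
      (fderiv ℝ g (Fin.insertNth (α := fun _ => ℝ) j t y) (Pi.single j 1)) t :=
    fun t => (hgdiff _).hasFDerivAt.comp_hasDerivAt t (hLd t)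
  have hc' : Continuous fun t : ℝ => fderiv ℝ g (Fin.insertNth (α := fun _ => ℝ) j t y) (Pi.single j 1) :=
    (hg'c.comp hLc).clm_apply continuous_const
  have hnorm : ∀ t : ℝ, (1 + ‖Fin.insertNth (α := fun _ => ℝ) j t y‖) ^ k ≤ (1 + ‖y‖) ^ k * (1 + |t|) ^ k := by
    intro t
    have h1 : 1 + ‖Fin.insertNth (α := fun _ => ℝ) j t y‖ ≤ (1 + ‖y‖) * (1 + |t|) := by
      have := insertNth_norm_le j y t
      nlinarith [abs_nonneg t, norm_nonneg y]
    calc (1 + ‖Fin.insertNth (α := fun _ => ℝ) j t y‖) ^ k ≤ ((1 + ‖y‖) * (1 + |t|)) ^ k :=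
          pow_le_pow_left₀ (by positivity) h1 k
      _ = (1 + ‖y‖) ^ k * (1 + |t|) ^ k := mul_pow _ _ _
  have hb : ∀ t : ℝ, |g (Fin.insertNth (α := fun _ => ℝ) j t y)| ≤ (C * (1 + ‖y‖) ^ k) * (1 + |t|) ^ k := by
    intro t
    calc |g (Fin.insertNth (α := fun _ => ℝ) j t y)| ≤ C * (1 + ‖Fin.insertNth (α := fun _ => ℝ) j t y‖) ^ k := hbg _
      _ ≤ C * ((1 + ‖y‖) ^ k * (1 + |t|) ^ k) :=
          mul_le_mul_of_nonneg_left (hnorm t) hC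
      _ = (C * (1 + ‖y‖) ^ k) * (1 + |t|) ^ k := by ring
  have hb' : ∀ t : ℝ, |fderiv ℝ g (Fin.insertNth (α := fun _ => ℝ) j t y) (Pi.single j 1)|
      ≤ (C * (1 + ‖y‖) ^ k) * (1 + |t|) ^ k := by
    intro t
    calc |fderiv ℝ g (Fin.insertNth (α := fun _ => ℝ) j t y) (Pi.single j 1)|
        ≤ C * (1 + ‖Fin.insertNth (α := fun _ => ℝ) j t y‖) ^ k := hF2b _
      _ ≤ C * ((1 + ‖y‖) ^ k * (1 + |t|) ^ k) :=
          mul_le_mul_of_nonneg_left (hnorm t) hC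
      _ = (C * (1 + ‖y‖) ^ k) * (1 + |t|) ^ k := by ring
  have := stein1 hd hc' hb hb'
  simpa only [Fin.insertNth_apply_same] using this

end
set_option maxHeartbeats 1000000 in
/-- Multivariate Stein's lemma.  The Gaussian vector `X` is represented as
`X i = μ i + ∑ j, A i j * W j` where `W` is a vector of i.i.d. standard normals,
so that `Cov (X i, X k) = ∑ j, A i j * A k j`. -/
theorem multivariate_stein (n : ℕ) (hn : 0 < n) (μ : Fin n → ℝ)
    (A : Matrix (Fin n) (Fin n) ℝ) (f : (Fin n → ℝ) → ℝ)
    (hf : ContDiff ℝ 1 f)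
    (hfgrowth : ∃ (C : ℝ) (k : ℕ), ∀ x, |f x| ≤ C * (1 + ‖x‖) ^ k)
    (hf'growth : ∃ (C : ℝ) (k : ℕ), ∀ x, ‖fderiv ℝ f x‖ ≤ C * (1 + ‖x‖) ^ k) :
    (∫ w : Fin n → ℝ,
        ((μ ⟨0, hn⟩ + ∑ j, A ⟨0, hn⟩ j * w j) - μ ⟨0, hn⟩) *
          f (fun i => μ i + ∑ j, A i j * w j)
        ∂(Measure.pi fun _ : Fin n => gaussianReal 0 1))
      = ∑ i, (∑ j, A ⟨0, hn⟩ j * A i j) *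
          ∫ w : Fin n → ℝ,
            fderiv ℝ f (fun i => μ i + ∑ j, A i j * w j) (Pi.single i 1)
            ∂(Measure.pi fun _ : Fin n => gaussianReal 0 1) := by
  obtain ⟨m, rfl⟩ : ∃ m, n = m + 1 := ⟨n - 1, (Nat.succ_pred_eq_of_pos hn).symm⟩
  obtain ⟨C, k, hC⟩ := hfgrowth
  obtain ⟨C', k', hC'⟩ := hf'growth
  have hC0 : 0 ≤ C := le_trans (abs_nonneg _) (by simpa using hC 0)
  have hC'0 : 0 ≤ C' := le_trans (norm_nonneg _) (by simpa using hC' 0)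
  set i0 : Fin (m+1) := ⟨0, hn⟩ with hi0
  set Γ := Measure.pi fun _ : Fin (m+1) => gaussianReal 0 1 with hΓ
  set Lmap : (Fin (m+1) → ℝ) →L[ℝ] (Fin (m+1) → ℝ) :=
    LinearMap.toContinuousLinearMap (Matrix.mulVecLin A) with hLmap_def
  have hLmap : ∀ v, Lmap v = A.mulVec v := fun v => rfl
  set T : (Fin (m+1) → ℝ) → (Fin (m+1) → ℝ) :=
    fun w => fun i => μ i + ∑ j, A i j * w j with hT_def
  have hTeq : T = fun w => μ + Lmap w := by
    funext w i
    simp [hT_def, hLmap, Matrix.mulVec, dotProduct]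
  have hTd : ∀ w, HasFDerivAt T Lmap w := by
    intro w
    rw [hTeq]
    exact (Lmap.hasFDerivAt).const_add μ
  have hTc : Continuous T := by
    rw [hTeq]
    exact continuous_const.add Lmap.continuous
  set g : (Fin (m+1) → ℝ) → ℝ := fun w => f (T w) with hg_def
  have hg : ContDiff ℝ 1 g := by
    rw [hg_def, hTeq]
    exact hf.comp (contDiff_const.add Lmap.contDiff)
  have hfderiv_g : ∀ w, fderiv ℝ g w = (fderiv ℝ f (T w)).comp Lmap := by
    intro w
    exact (((hf.differentiable one_ne_zero) (T w)).hasFDerivAt.comp w (hTd w)).fderiv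
  -- norm bound for T
  set M : ℝ := ‖Lmap‖ with hM_def
  have hM : 0 ≤ M := norm_nonneg _
  set D : ℝ := (1 + ‖μ‖) * (1 + M) with hD_def
  have hD1 : 1 ≤ D := by
    have h1 : 0 ≤ ‖μ‖ := norm_nonneg _
    rw [hD_def]; nlinarith
  have hD0 : 0 < D := lt_of_lt_of_le one_pos hD1
  have hTb : ∀ w, 1 + ‖T w‖ ≤ D * (1 + ‖w‖) := by
    intro w
    have h1 : ‖T w‖ ≤ ‖μ‖ + M * ‖w‖ := by
      rw [hTeq]
      refine le_trans (norm_add_le _ _) ?_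
      exact add_le_add_right (Lmap.le_opNorm w) _
    have h2 : 0 ≤ ‖μ‖ := norm_nonneg _
    have h3 : 0 ≤ ‖w‖ := norm_nonneg _
    rw [hD_def]
    nlinarith [mul_nonneg (mul_nonneg h2 hM) h3, mul_nonneg hM h3, mul_nonneg h2 hM,
      mul_nonneg h2 h3]
  have hTbk : ∀ (w) (l : ℕ), (1 + ‖T w‖) ^ l ≤ D ^ l * (1 + ‖w‖) ^ l := by
    intro w l
    calc (1 + ‖T w‖) ^ l ≤ (D * (1 + ‖w‖)) ^ l :=
          pow_le_pow_left₀ (by positivity) (hTb w) l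
      _ = D ^ l * (1 + ‖w‖) ^ l := mul_pow _ _ _
  -- uniform growth bounds for g
  set K : ℕ := max k k' with hK_def
  set C₀ : ℝ := C * D ^ k + C' * M * D ^ k' with hC₀_def
  have hpad : ∀ (w : Fin (m+1) → ℝ) (l : ℕ), l ≤ K → (1 + ‖w‖) ^ l ≤ (1 + ‖w‖) ^ K := by
    intro w l hl
    exact pow_le_pow_right₀ (by linarith [norm_nonneg w]) hl
  have hbg : ∀ w, |g w| ≤ C₀ * (1 + ‖w‖) ^ K := by
    intro w
    have h1 : |g w| ≤ C * (1 + ‖T w‖) ^ k := hC (T w)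
    have h2 := hTbk w k
    have h3 := hpad w k (le_max_left _ _)
    have h4 : (0:ℝ) ≤ (1 + ‖w‖) ^ k := by positivity
    have h5 : (0:ℝ) ≤ (1 + ‖w‖) ^ K := by positivity
    have h6 : (0:ℝ) < D ^ k := by positivity
    have h7 : (0:ℝ) ≤ C' * M * D ^ k' := by positivity
    have h8 : |g w| ≤ C * D ^ k * (1 + ‖w‖) ^ k := by nlinarith
    rw [hC₀_def]
    nlinarith [mul_le_mul_of_nonneg_left h3 (mul_nonneg hC0 h6.le)]
  have hbfT : ∀ w, ‖fderiv ℝ f (T w)‖ ≤ (C' * D ^ k') * (1 + ‖w‖) ^ k' := by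
    intro w
    have h1 := hC' (T w)
    have h2 := hTbk w k'
    nlinarith [pow_nonneg (by linarith [norm_nonneg w] : (0:ℝ) ≤ 1 + ‖w‖) k']
  have hbg' : ∀ w, ‖fderiv ℝ g w‖ ≤ C₀ * (1 + ‖w‖) ^ K := by
    intro w
    rw [hfderiv_g w]
    have h1 : ‖(fderiv ℝ f (T w)).comp Lmap‖ ≤ ‖fderiv ℝ f (T w)‖ * M :=
      ContinuousLinearMap.opNorm_comp_le _ _
    have h2 := hbfT w
    have h3 := hpad w k' (le_max_right _ _)
    have h5 : (0:ℝ) ≤ (1 + ‖w‖) ^ K := by positivity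
    have h4 : (0:ℝ) ≤ (1 + ‖w‖) ^ k' := by positivity
    have h6 : (0:ℝ) < D ^ k' := by positivity
    have h7 : (0:ℝ) ≤ C * D ^ k := by positivity
    rw [hC₀_def]
    nlinarith [mul_le_mul_of_nonneg_left h3 (by positivity : (0:ℝ) ≤ C' * M * D ^ k')]
  -- integrability of the basic integrands
  have hIc : ∀ i : Fin (m+1), Continuous fun w => fderiv ℝ f (T w) (Pi.single i 1) :=
    fun i => (((hf.continuous_fderiv one_ne_zero).comp hTc).clm_apply continuous_const)
  have hIb : ∀ (i : Fin (m+1)) (w), |fderiv ℝ f (T w) (Pi.single i 1)|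
      ≤ (C' * D ^ k') * (1 + ‖w‖) ^ k' := by
    intro i w
    rw [← Real.norm_eq_abs]
    calc ‖fderiv ℝ f (T w) (Pi.single i 1)‖
        ≤ ‖fderiv ℝ f (T w)‖ * ‖(Pi.single i 1 : Fin (m+1) → ℝ)‖ :=
          (fderiv ℝ f (T w)).le_opNorm _
      _ ≤ ‖fderiv ℝ f (T w)‖ * 1 :=
          mul_le_mul_of_nonneg_left (norm_single_le i) (norm_nonneg _)
      _ = ‖fderiv ℝ f (T w)‖ := mul_one _
      _ ≤ (C' * D ^ k') * (1 + ‖w‖) ^ k' := hbfT w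
  have hIi : ∀ i : Fin (m+1),
      Integrable (fun w => fderiv ℝ f (T w) (Pi.single i 1)) Γ :=
    fun i => integrable_of_poly_growth (hIc i) (hIb i)
  have hgc : Continuous g := hg.continuous
  have hWj : ∀ j : Fin (m+1), Integrable (fun w => w j * g w) Γ := by
    intro j
    refine integrable_of_poly_growth ((continuous_apply j).mul hgc) (C := C₀) (k := K + 1) ?_
    intro w
    rw [abs_mul]
    have h1 : |w j| ≤ 1 + ‖w‖ := by
      have := norm_le_pi_norm w j
      rw [Real.norm_eq_abs] at this
      linarith
    calc |w j| * |g w| ≤ (1 + ‖w‖) * (C₀ * (1 + ‖w‖) ^ K) :=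
          mul_le_mul h1 (hbg w) (abs_nonneg _) (by linarith [norm_nonneg w])
      _ = C₀ * ((1 + ‖w‖) * (1 + ‖w‖) ^ K) := by ring
      _ = C₀ * (1 + ‖w‖) ^ (K+1) := by rw [← pow_succ']
  -- the column decomposition
  have colA : ∀ j : Fin (m+1), A.mulVec (Pi.single j 1) = fun i => A i j := by
    intro j
    funext i
    simp [Matrix.mulVec, dotProduct, Pi.single_apply, mul_ite]
  have hstep : ∀ (j : Fin (m+1)) (w : Fin (m+1) → ℝ),
      fderiv ℝ g w (Pi.single j 1)
        = ∑ i, A i j * fderiv ℝ f (T w) (Pi.single i 1) := by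
    intro j w
    rw [hfderiv_g w]
    show fderiv ℝ f (T w) (Lmap (Pi.single j 1)) = _
    rw [hLmap, colA j]
    have hcol : (fun i => A i j) = ∑ i, (A i j) • (Pi.single i 1 : Fin (m+1) → ℝ) := by
      rw [← Finset.univ_sum_single (fun i => A i j)]
      refine Finset.sum_congr rfl fun i _ => ?_
      rw [← Pi.single_smul, smul_eq_mul, mul_one]
    rw [hcol, map_sum]
    refine Finset.sum_congr rfl fun i _ => ?_
    rw [ContinuousLinearMap.map_smul, smul_eq_mul]
  -- main computation
  simp only [add_sub_cancel_left]
  have hrw : ∀ w : Fin (m+1) → ℝ, (fun i => μ i + ∑ j, A i j * w j) = T w := fun w => rfl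
  simp only [hrw]
  show (∫ w, (∑ j, A i0 j * w j) * g w ∂Γ)
      = ∑ i, (∑ j, A i0 j * A i j) * ∫ w, fderiv ℝ f (T w) (Pi.single i 1) ∂Γ
  have step1 : (∫ w, (∑ j, A i0 j * w j) * g w ∂Γ)
      = ∑ j, A i0 j * ∫ w, w j * g w ∂Γ := by
    rw [show (fun w : Fin (m+1) → ℝ => (∑ j, A i0 j * w j) * g w)
        = fun w => ∑ j, A i0 j * (w j * g w) by
      funext w
      rw [Finset.sum_mul]
      exact Finset.sum_congr rfl fun j _ => mul_assoc _ _ _]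
    rw [integral_finset_sum _ fun j _ => (hWj j).const_mul _]
    exact Finset.sum_congr rfl fun j _ => integral_const_mul _ _
  have step2 : ∀ j : Fin (m+1), ∫ w, w j * g w ∂Γ
      = ∑ i, A i j * ∫ w, fderiv ℝ f (T w) (Pi.single i 1) ∂Γ := by
    intro j
    rw [stein_pi j hg hbg hbg']
    have : (fun w => fderiv ℝ g w (Pi.single j 1))
        = fun w => ∑ i, A i j * fderiv ℝ f (T w) (Pi.single i 1) := by
      funext w
      exact hstep j w
    rw [this, integral_finset_sum _ fun i _ => (hIi i).const_mul _]
    exact Finset.sum_congr rfl fun i _ => integral_const_mul _ _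
  rw [step1]
  simp only [step2]
  calc ∑ j, A i0 j * ∑ i, A i j * ∫ w, fderiv ℝ f (T w) (Pi.single i 1) ∂Γ
      = ∑ j, ∑ i, A i0 j * (A i j * ∫ w, fderiv ℝ f (T w) (Pi.single i 1) ∂Γ) := by
        simp only [Finset.mul_sum]
    _ = ∑ i, ∑ j, A i0 j * (A i j * ∫ w, fderiv ℝ f (T w) (Pi.single i 1) ∂Γ) :=
        Finset.sum_comm
    _ = ∑ i, (∑ j, A i0 j * A i j) * ∫ w, fderiv ℝ f (T w) (Pi.single i 1) ∂Γ := by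
        refine Finset.sum_congr rfl fun i _ => ?_
        rw [Finset.sum_mul]
        exact Finset.sum_congr rfl fun j _ => (mul_assoc _ _ _).symm
end

section
/- Stein simplification: let (X₁, X₂) be jointly Gaussian with Cov(X₁, X₂) = ν₁₂ and X₁ ~ N(μ₁, ν₁₁). If σ : ℝ → ℝ is differentiable with polynomial growth, then Cov(σ(X₁), X₂) = ν₁₂ · E[σ'(X₁)]. -/
open MeasureTheory ProbabilityTheory Real
open scoped NNReal
open scoped ENNReal

namespace SteinAux

noncomputable def φ (x : ℝ) : ℝ := gaussianPDFReal 0 1 x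

lemma φ_nonneg (x : ℝ) : 0 ≤ φ x := gaussianPDFReal_nonneg 0 1 x

lemma φ_eq (x : ℝ) : φ x = (Real.sqrt (2 * Real.pi))⁻¹ * Real.exp (-(1/2) * x ^ 2) := by
  simp only [φ, gaussianPDFReal, NNReal.coe_one, mul_one, sub_zero]
  ring_nf

lemma hasDerivAt_negφ (x : ℝ) : HasDerivAt (fun y => -φ y) (x * φ x) x := by
  have h1 : HasDerivAt (fun y : ℝ => -(1/2) * y ^ 2) (-x) x := by
    simpa using (hasDerivAt_pow 2 x).const_mul (-(1/2) : ℝ)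
  have h2 := ((h1.exp).const_mul ((Real.sqrt (2 * Real.pi))⁻¹)).neg
  have hfun : (fun y => -φ y) = (fun y => -((Real.sqrt (2 * Real.pi))⁻¹ * rexp (-(1/2) * y ^ 2))) := by
    funext y; rw [φ_eq]
  have hval : x * φ x = -((Real.sqrt (2 * Real.pi))⁻¹ * (rexp (-(1/2) * x ^ 2) * -x)) := by
    rw [φ_eq]; ring
  rw [hfun, hval]; exact h2

end SteinAux

namespace SteinAux

lemma pow_factorial_le_exp {t : ℝ} (ht : 0 ≤ t) (k : ℕ) :
    t ^ k ≤ k.factorial * Real.exp t := by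
  have h1 : t ^ k / k.factorial ≤ ∑ i ∈ Finset.range (k+1), t ^ i / i.factorial :=
    Finset.single_le_sum (f := fun i => t ^ i / i.factorial)
      (fun i _ => by positivity) (Finset.self_mem_range_succ k)
  have h2 := Real.sum_le_exp_of_nonneg ht (k+1)
  have hk : (0:ℝ) < k.factorial := by exact_mod_cast k.factorial_pos
  calc t ^ k = (t ^ k / k.factorial) * k.factorial := by field_simp
  _ ≤ Real.exp t * k.factorial :=
      mul_le_mul_of_nonneg_right (h1.trans h2) hk.le
  _ = k.factorial * Real.exp t := by ring

lemma growth_gauss_le (k : ℕ) (x : ℝ) :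
    (1+|x|)^k * Real.exp (-(1/2) * x^2)
      ≤ (8:ℝ)^k * k.factorial * Real.exp (1/4) * Real.exp (-(1/4) * x^2) := by
  have hx : (1+|x|) ≤ 2*(1+x^2) := by nlinarith [sq_nonneg (|x|-1), sq_abs x, abs_nonneg x]
  have h1 : (1+|x|)^k ≤ (2*(1+x^2))^k := pow_le_pow_left₀ (by positivity) hx k
  have h2 : ((1+x^2)/4)^k ≤ k.factorial * Real.exp ((1+x^2)/4) :=
    pow_factorial_le_exp (by positivity) k
  have h3 : (1+x^2)^k ≤ 4^k * (k.factorial * Real.exp ((1+x^2)/4)) := by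
    have h4 := mul_le_mul_of_nonneg_left h2 (by positivity : (0:ℝ) ≤ (4:ℝ)^k)
    calc (1+x^2)^k = 4^k * ((1+x^2)/4)^k := by rw [← mul_pow]; ring_nf
    _ ≤ _ := h4
  have hexp : Real.exp ((1+x^2)/4) * Real.exp (-(1/2)*x^2)
      = Real.exp (1/4) * Real.exp (-(1/4)*x^2) := by
    rw [← Real.exp_add, ← Real.exp_add]; ring_nf
  calc (1+|x|)^k * Real.exp (-(1/2) * x^2)
      ≤ (2*(1+x^2))^k * Real.exp (-(1/2) * x^2) :=
        mul_le_mul_of_nonneg_right h1 (Real.exp_nonneg _)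
  _ = 2^k * (1+x^2)^k * Real.exp (-(1/2)*x^2) := by rw [mul_pow]
  _ ≤ 2^k * (4^k * (k.factorial * Real.exp ((1+x^2)/4))) * Real.exp (-(1/2)*x^2) :=
        mul_le_mul_of_nonneg_right
          (mul_le_mul_of_nonneg_left h3 (by positivity)) (Real.exp_nonneg _)
  _ = (8:ℝ)^k * k.factorial * (Real.exp ((1+x^2)/4) * Real.exp (-(1/2)*x^2)) := by
        rw [show (8:ℝ) = 2*4 by norm_num, mul_pow]; ring
  _ = _ := by rw [hexp]; ring

lemma integrable_growth_phi {g : ℝ → ℝ} (hm : AEStronglyMeasurable g volume)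
    (hg : ∃ C k, ∀ x, |g x| ≤ C * (1+|x|)^k) :
    Integrable (fun x => g x * φ x) := by
  obtain ⟨C, k, h⟩ := hg
  set D : ℝ := (Real.sqrt (2 * Real.pi))⁻¹ * |C| * ((8:ℝ)^k * k.factorial * Real.exp (1/4)) with hD
  refine Integrable.mono' (g := fun x => D * Real.exp (-(1/4) * x^2))
    ((integrable_exp_neg_mul_sq (by norm_num : (0:ℝ) < 1/4)).const_mul D)
    (hm.mul ((measurable_gaussianPDFReal 0 1).aestronglyMeasurable))
    (ae_of_all _ fun x => ?_)
  rw [norm_mul, Real.norm_eq_abs, Real.norm_eq_abs, abs_of_nonneg (φ_nonneg x), φ_eq]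
  have h1 : |g x| ≤ |C| * (1+|x|)^k :=
    (h x).trans (mul_le_mul_of_nonneg_right (le_abs_self C) (by positivity))
  calc |g x| * ((Real.sqrt (2 * Real.pi))⁻¹ * Real.exp (-(1/2)*x^2))
      ≤ (|C| * (1+|x|)^k) * ((Real.sqrt (2 * Real.pi))⁻¹ * Real.exp (-(1/2)*x^2)) := by
        apply mul_le_mul_of_nonneg_right h1 (by positivity)
  _ = ((Real.sqrt (2 * Real.pi))⁻¹ * |C|) * ((1+|x|)^k * Real.exp (-(1/2)*x^2)) := by ring
  _ ≤ ((Real.sqrt (2 * Real.pi))⁻¹ * |C|)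
        * ((8:ℝ)^k * k.factorial * Real.exp (1/4) * Real.exp (-(1/4)*x^2)) := by
        apply mul_le_mul_of_nonneg_left (growth_gauss_le k x) (by positivity)
  _ = D * Real.exp (-(1/4)*x^2) := by rw [hD]; ring

lemma integral_gauss (g : ℝ → ℝ) :
    ∫ x, g x ∂(gaussianReal 0 1) = ∫ x, g x * φ x := by
  rw [gaussianReal_of_var_ne_zero 0 one_ne_zero]
  have hrw : gaussianPDF 0 1 = fun x => ((fun x => (gaussianPDFReal 0 1 x).toNNReal) x : ℝ≥0∞) := rfl
  rw [hrw, integral_withDensity_eq_integral_smul ((measurable_gaussianPDFReal 0 1).real_toNNReal) g]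
  congr 1; funext x
  rw [NNReal.smul_def, smul_eq_mul, Real.coe_toNNReal _ (gaussianPDFReal_nonneg 0 1 x), mul_comm]
  rfl

lemma integrable_gauss {g : ℝ → ℝ} (hm : AEStronglyMeasurable g volume)
    (hg : ∃ C k, ∀ x, |g x| ≤ C * (1+|x|)^k) :
    Integrable g (gaussianReal 0 1) := by
  rw [gaussianReal_of_var_ne_zero 0 one_ne_zero]
  have hrw : gaussianPDF 0 1 = fun x => ((fun x => (gaussianPDFReal 0 1 x).toNNReal) x : ℝ≥0∞) := rfl
  rw [hrw, integrable_withDensity_iff_integrable_smul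
    ((measurable_gaussianPDFReal 0 1).real_toNNReal)]
  have h2 : (fun x => (gaussianPDFReal 0 1 x).toNNReal • g x) = fun x => g x * φ x := by
    funext x; rw [NNReal.smul_def, smul_eq_mul, Real.coe_toNNReal _ (gaussianPDFReal_nonneg 0 1 x), mul_comm]
    rfl
  rw [h2]; exact integrable_growth_phi hm hg

lemma growth_nonneg {g : ℝ → ℝ} {C : ℝ} {k : ℕ} (h : ∀ x, |g x| ≤ C * (1+|x|)^k) : 0 ≤ C := by
  have h0 := (abs_nonneg (g 0)).trans (h 0)
  simpa using h0

lemma growth_mul {g₁ g₂ : ℝ → ℝ} (h₁ : ∃ C k, ∀ x, |g₁ x| ≤ C * (1+|x|)^k)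
    (h₂ : ∃ C k, ∀ x, |g₂ x| ≤ C * (1+|x|)^k) :
    ∃ C k, ∀ x, |g₁ x * g₂ x| ≤ C * (1+|x|)^k := by
  obtain ⟨C₁, k₁, h₁⟩ := h₁; obtain ⟨C₂, k₂, h₂⟩ := h₂
  refine ⟨C₁*C₂, k₁+k₂, fun x => ?_⟩
  have hm := mul_le_mul (h₁ x) (h₂ x) (abs_nonneg _) ((abs_nonneg _).trans (h₁ x))
  calc |g₁ x * g₂ x| = |g₁ x| * |g₂ x| := abs_mul _ _
  _ ≤ (C₁*(1+|x|)^k₁) * (C₂*(1+|x|)^k₂) := hm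
  _ = C₁*C₂*(1+|x|)^(k₁+k₂) := by rw [pow_add]; ring

lemma growth_affine {g : ℝ → ℝ} (h : ∃ C k, ∀ x, |g x| ≤ C * (1+|x|)^k) (p q : ℝ) :
    ∃ C k, ∀ x, |g (p + q * x)| ≤ C * (1+|x|)^k := by
  obtain ⟨C, k, h⟩ := h
  have hC := growth_nonneg h
  refine ⟨C * (1+|p|+|q|)^k, k, fun x => ?_⟩
  have h1 : 1 + |p + q * x| ≤ (1+|p|+|q|) * (1+|x|) := by
    have ha := abs_add_le p (q*x)
    have hb : |q*x| = |q| * |x| := abs_mul q x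
    nlinarith [abs_nonneg p, abs_nonneg q, abs_nonneg x, abs_nonneg (p+q*x)]
  calc |g (p+q*x)| ≤ C * (1+|p+q*x|)^k := h _
  _ ≤ C * ((1+|p|+|q|) * (1+|x|))^k :=
      mul_le_mul_of_nonneg_left (pow_le_pow_left₀ (by positivity) h1 k) hC
  _ = C * (1+|p|+|q|)^k * (1+|x|)^k := by rw [mul_pow]; ring

lemma growth_id : ∃ C k, ∀ x : ℝ, |x| ≤ C * (1+|x|)^k :=
  ⟨1, 1, fun x => by simp⟩

lemma growth_affine_fun (p q : ℝ) : ∃ C k, ∀ x : ℝ, |p + q * x| ≤ C * (1+|x|)^k := by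
  refine ⟨|p|+|q|+1, 1, fun x => ?_⟩
  have ha := abs_add_le p (q*x)
  have hb : |q*x| = |q| * |x| := abs_mul q x
  simp only [pow_one]
  nlinarith [abs_nonneg p, abs_nonneg q, abs_nonneg x]

lemma growth_const (c : ℝ) : ∃ C k, ∀ x : ℝ, |(fun _ : ℝ => c) x| ≤ C * (1+|x|)^k :=
  ⟨|c|, 0, fun x => by simp⟩

end SteinAux

namespace SteinAux

lemma stein {f : ℝ → ℝ} (hf : Differentiable ℝ f)
    (h1 : ∃ C k, ∀ x, |f x| ≤ C * (1+|x|)^k)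
    (h2 : ∃ C k, ∀ x, |deriv f x| ≤ C * (1+|x|)^k) :
    ∫ x, f x * x ∂(gaussianReal 0 1) = ∫ x, deriv f x ∂(gaussianReal 0 1) := by
  have hfc : AEStronglyMeasurable f (volume : Measure ℝ) :=
    hf.continuous.aestronglyMeasurable
  have hf'm : AEStronglyMeasurable (deriv f) (volume : Measure ℝ) :=
    (measurable_deriv f).aestronglyMeasurable
  rw [integral_gauss, integral_gauss]
  have i1 : Integrable (f * fun x => x * φ x) := by
    have e : (f * fun x => x * φ x) = fun x => (f x * x) * φ x := by
      funext x; simp [mul_assoc]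
    rw [e]
    exact integrable_growth_phi (hfc.mul aestronglyMeasurable_id)
      (growth_mul h1 growth_id)
  have i2 : Integrable (deriv f * fun x => -φ x) := by
    have e : (deriv f * fun x => -φ x) = fun x => -(deriv f x * φ x) := by
      funext x; simp
    rw [e]
    exact (integrable_growth_phi hf'm h2).neg
  have i3 : Integrable (f * fun x => -φ x) := by
    have e : (f * fun x => -φ x) = fun x => -(f x * φ x) := by
      funext x; simp
    rw [e]
    exact (integrable_growth_phi hfc h1).neg
  have key := integral_mul_deriv_eq_deriv_mul_of_integrable
    (u := f) (u' := deriv f) (v := fun x => -φ x) (v' := fun x => x * φ x)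
    (fun x _ => (hf x).hasDerivAt) (fun x _ => hasDerivAt_negφ x) i1 i2 i3
  calc ∫ x, f x * x * φ x = ∫ x, f x * (x * φ x) := by simp_rw [mul_assoc]
  _ = - ∫ x, deriv f x * (-φ x) := key
  _ = ∫ x, deriv f x * φ x := by
      rw [← integral_neg]; congr 1; funext x; ring

instance : IsProbabilityMeasure (gaussianReal (0:ℝ) 1) := by infer_instance

lemma integral_fst_P2 (g : ℝ → ℝ) :
    ∫ w : ℝ × ℝ, g w.1 ∂((gaussianReal 0 1).prod (gaussianReal 0 1))
      = ∫ x, g x ∂(gaussianReal 0 1) := by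
  have h := integral_prod_mul (μ := gaussianReal 0 1) (ν := gaussianReal 0 1)
    g (fun _ => (1:ℝ))
  simpa using h

lemma integral_gauss_id_zero : ∫ x, x ∂(gaussianReal (0:ℝ) 1) = 0 := by
  have h := stein (f := fun _ => (1:ℝ)) (differentiable_const 1)
    (growth_const 1) (by simpa [deriv_const'] using growth_const (0:ℝ))
  simpa [deriv_const'] using h

end SteinAux

open SteinAux in
theorem stein_cov_simplification' (μ₁ μ₂ ν₁₁ ν₂₂ ν₁₂ a b c : ℝ)
    (h11 : ν₁₁ = a ^ 2) (h22 : ν₂₂ = b ^ 2 + c ^ 2) (h12 : ν₁₂ = a * b)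
    (σ : ℝ → ℝ) (hσ : Differentiable ℝ σ)
    (hσgrowth : ∃ (C : ℝ) (k : ℕ), ∀ x, |σ x| ≤ C * (1 + |x|) ^ k)
    (hσ'growth : ∃ (C : ℝ) (k : ℕ), ∀ x, |deriv σ x| ≤ C * (1 + |x|) ^ k) :
    (∫ w : ℝ × ℝ, σ (μ₁ + a * w.1) * (μ₂ + b * w.1 + c * w.2)
        ∂((gaussianReal 0 1).prod (gaussianReal 0 1)))
        - (∫ w : ℝ × ℝ, σ (μ₁ + a * w.1) ∂((gaussianReal 0 1).prod (gaussianReal 0 1))) * μ₂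
      = ν₁₂ * ∫ w : ℝ × ℝ, deriv σ (μ₁ + a * w.1)
          ∂((gaussianReal 0 1).prod (gaussianReal 0 1)) := by
  have hfd : Differentiable ℝ (fun y => σ (μ₁ + a * y)) :=
    hσ.comp ((differentiable_const μ₁).add (differentiable_id.const_mul a))
  have hderiva : ∀ x : ℝ, HasDerivAt (fun y => σ (μ₁ + a * y)) (deriv σ (μ₁ + a * x) * a) x := by
    intro x
    have haff : HasDerivAt (fun y : ℝ => μ₁ + a * y) a x := by
      simpa using ((hasDerivAt_id x).const_mul a).const_add μ₁
    exact (hσ (μ₁ + a * x)).hasDerivAt.comp x haff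
  have hderiv_eq : deriv (fun y => σ (μ₁ + a * y)) = fun x => deriv σ (μ₁ + a * x) * a :=
    funext fun x => (hderiva x).deriv
  have gσaff : ∃ C k, ∀ x : ℝ, |σ (μ₁ + a * x)| ≤ C * (1 + |x|) ^ k :=
    growth_affine hσgrowth μ₁ a
  have gf' : ∃ C k, ∀ x, |deriv (fun y => σ (μ₁ + a * y)) x| ≤ C * (1 + |x|) ^ k := by
    simp only [hderiv_eq]
    exact growth_mul (growth_affine hσ'growth μ₁ a) ⟨|a|, 0, fun x => by simp⟩
  have cf : Continuous (fun x => σ (μ₁ + a * x)) := hσ.continuous.comp (by continuity)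
  have iH : Integrable (fun x => σ (μ₁ + a * x) * (μ₂ + b * x)) (gaussianReal 0 1) :=
    integrable_gauss ((cf.mul (by continuity)).aestronglyMeasurable)
      (growth_mul gσaff (growth_affine_fun μ₂ b))
  have icf : Integrable (fun x => c * σ (μ₁ + a * x)) (gaussianReal 0 1) :=
    (integrable_gauss cf.aestronglyMeasurable gσaff).const_mul c
  have iid : Integrable (fun y : ℝ => y) (gaussianReal 0 1) :=
    integrable_gauss aestronglyMeasurable_id growth_id
  have ifa : Integrable (fun x => σ (μ₁ + a * x)) (gaussianReal 0 1) :=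
    integrable_gauss cf.aestronglyMeasurable gσaff
  have ifx : Integrable (fun x => σ (μ₁ + a * x) * x) (gaussianReal 0 1) :=
    integrable_gauss ((cf.mul continuous_id).aestronglyMeasurable) (growth_mul gσaff growth_id)
  have hsplit : (fun w : ℝ × ℝ => σ (μ₁ + a * w.1) * (μ₂ + b * w.1 + c * w.2))
      = fun w => (fun x => σ (μ₁ + a * x) * (μ₂ + b * x)) w.1 * (fun _ => (1:ℝ)) w.2
        + (fun x => c * σ (μ₁ + a * x)) w.1 * (fun y => y) w.2 := by
    funext w; simp only; ring
  rw [show (∫ w : ℝ × ℝ, σ (μ₁ + a * w.1) * (μ₂ + b * w.1 + c * w.2)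
        ∂((gaussianReal 0 1).prod (gaussianReal 0 1)))
      = ∫ w : ℝ × ℝ, ((fun x => σ (μ₁ + a * x) * (μ₂ + b * x)) w.1 * (fun _ => (1:ℝ)) w.2
        + (fun x => c * σ (μ₁ + a * x)) w.1 * (fun y => y) w.2)
        ∂((gaussianReal 0 1).prod (gaussianReal 0 1)) from by rw [← hsplit],
    integral_add (iH.mul_prod (integrable_const 1)) (icf.mul_prod iid)]
  have e1 : (∫ z : ℝ × ℝ, σ (μ₁ + a * z.1) * (μ₂ + b * z.1) * 1
        ∂((gaussianReal 0 1).prod (gaussianReal 0 1)))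
      = (∫ x, σ (μ₁ + a * x) * (μ₂ + b * x) ∂(gaussianReal 0 1)) * ∫ y : ℝ, (1:ℝ) ∂(gaussianReal 0 1) :=
    integral_prod_mul (fun x => σ (μ₁ + a * x) * (μ₂ + b * x)) (fun _ => (1:ℝ))
  have e2 : (∫ z : ℝ × ℝ, c * σ (μ₁ + a * z.1) * z.2
        ∂((gaussianReal 0 1).prod (gaussianReal 0 1)))
      = (∫ x, c * σ (μ₁ + a * x) ∂(gaussianReal 0 1)) * ∫ y : ℝ, y ∂(gaussianReal 0 1) :=
    integral_prod_mul (fun x => c * σ (μ₁ + a * x)) (fun y => y)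
  rw [e1, e2,
    show (∫ w : ℝ × ℝ, σ (μ₁ + a * w.1) ∂((gaussianReal 0 1).prod (gaussianReal 0 1)))
      = ∫ x, σ (μ₁ + a * x) ∂(gaussianReal 0 1) from integral_fst_P2 (fun x => σ (μ₁ + a * x)),
    show (∫ w : ℝ × ℝ, deriv σ (μ₁ + a * w.1) ∂((gaussianReal 0 1).prod (gaussianReal 0 1)))
      = ∫ x, deriv σ (μ₁ + a * x) ∂(gaussianReal 0 1) from
        integral_fst_P2 (fun x => deriv σ (μ₁ + a * x))]
  simp only [integral_const, measure_univ, probReal_univ, ENNReal.toReal_one, smul_eq_mul, one_mul, mul_one,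
    integral_gauss_id_zero, mul_zero, add_zero]
  have hH : ∫ x, σ (μ₁ + a * x) * (μ₂ + b * x) ∂(gaussianReal 0 1)
      = μ₂ * (∫ x, σ (μ₁ + a * x) ∂(gaussianReal 0 1))
        + b * ∫ x, σ (μ₁ + a * x) * x ∂(gaussianReal 0 1) := by
    have e : ∀ x : ℝ, σ (μ₁ + a * x) * (μ₂ + b * x)
        = μ₂ * σ (μ₁ + a * x) + b * (σ (μ₁ + a * x) * x) := fun x => by ring
    simp_rw [e]
    rw [integral_add (ifa.const_mul μ₂) (ifx.const_mul b), integral_const_mul, integral_const_mul]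
  have hstein : ∫ x, σ (μ₁ + a * x) * x ∂(gaussianReal 0 1)
      = (∫ x, deriv σ (μ₁ + a * x) ∂(gaussianReal 0 1)) * a := by
    have h := stein hfd gσaff gf'
    rw [hderiv_eq] at h
    rw [h, integral_mul_const]
  rw [hH, hstein, h12]
  ring


theorem stein_cov_simplification (μ₁ μ₂ ν₁₁ ν₂₂ ν₁₂ a b c : ℝ)
    (h11 : ν₁₁ = a ^ 2) (h22 : ν₂₂ = b ^ 2 + c ^ 2) (h12 : ν₁₂ = a * b)
    (σ : ℝ → ℝ) (hσ : Differentiable ℝ σ)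
    (hσgrowth : ∃ (C : ℝ) (k : ℕ), ∀ x, |σ x| ≤ C * (1 + |x|) ^ k)
    (hσ'growth : ∃ (C : ℝ) (k : ℕ), ∀ x, |deriv σ x| ≤ C * (1 + |x|) ^ k) :
    (∫ w : ℝ × ℝ, σ (μ₁ + a * w.1) * (μ₂ + b * w.1 + c * w.2) ∂P2)
        - (∫ w : ℝ × ℝ, σ (μ₁ + a * w.1) ∂P2) * μ₂
      = ν₁₂ * ∫ w : ℝ × ℝ, deriv σ (μ₁ + a * w.1) ∂P2 := by
  exact stein_cov_simplification' μ₁ μ₂ ν₁₁ ν₂₂ ν₁₂ a b c h11 h22 h12 σ hσ hσgrowth hσ'growth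
end
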